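/- arXiv:2402.15762 — 4 statements merged into one kernel-verified Lean document; each statement's English description precedes it below -/
import Mathlib

section
/- Let Ω ⊆ ℝⁿ be a measurable set (with Lebesgue measure), let γ ∈ (1,2], and let β : ℝ → ℝ satisfy |β(s)| ≤ M for all s and |β(s) − β(r)| ≤ L|s − r| for all s, r, with M, L ≥ 0. Let u : ℝⁿ → ℝ be differentiable at every point of Ω with ∫_Ω |∇u(x)|² dx < ∞, and let v : Ω → ℝ be measurable with ∫_Ω |u(x) − v(x)|² dx < ∞. Then ∫_Ω |β(u(x)) − β(v(x))|² |∇u(x)|^{2(2−γ)} dx ≤ (2M)^{2(2−γ)} L^{2(γ−1)} (∫_Ω |∇u(x)|² dx)^{2−γ} (∫_Ω |u(x) − v(x)|² dx)^{γ−1}. -/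
open MeasureTheory Real ENNReal

theorem aux_holder {α : Type*} [MeasurableSpace α] (μ : Measure α) {θ : ℝ}
    (hθ0 : 0 ≤ θ) (hθ1 : θ < 1) {φ ψ : α → ℝ≥0∞}
    (hφ : AEMeasurable φ μ) (hψ : AEMeasurable ψ μ) :
    ∫⁻ a, φ a ^ θ * ψ a ^ (1 - θ) ∂μ ≤
      (∫⁻ a, φ a ∂μ) ^ θ * (∫⁻ a, ψ a ∂μ) ^ (1 - θ) := by
  rcases eq_or_lt_of_le hθ0 with h0 | h0
  · simp [← h0]
  · have hpq : Real.HolderConjugate (1/θ) (1/(1-θ)) := by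
      rw [Real.holderConjugate_iff]
      constructor
      · rw [lt_div_iff₀ h0]; linarith
      · rw [one_div, one_div, inv_inv, inv_inv]; ring
    have := ENNReal.lintegral_mul_le_Lp_mul_Lq μ hpq
      (f := fun a => φ a ^ θ) (g := fun a => ψ a ^ (1-θ))
      (hφ.pow_const _) (hψ.pow_const _)
    simp only [Pi.mul_apply] at this
    calc ∫⁻ a, φ a ^ θ * ψ a ^ (1 - θ) ∂μ
        ≤ (∫⁻ a, (φ a ^ θ) ^ (1/θ) ∂μ) ^ (1 / (1/θ)) *
          (∫⁻ a, (ψ a ^ (1-θ)) ^ (1/(1-θ)) ∂μ) ^ (1 / (1/(1-θ))) := by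
          simpa using this
      _ = (∫⁻ a, φ a ∂μ) ^ θ * (∫⁻ a, ψ a ∂μ) ^ (1 - θ) := by
          rw [one_div_one_div, one_div_one_div]
          congr 1
          · congr 1; refine lintegral_congr fun a => ?_
            rw [← ENNReal.rpow_mul, mul_one_div, div_self (ne_of_gt h0), ENNReal.rpow_one]
          · congr 1; refine lintegral_congr fun a => ?_
            rw [← ENNReal.rpow_mul, mul_one_div, div_self (by linarith), ENNReal.rpow_one]

/-- Lemma 2.1 of the paper: for `γ ∈ (1,2]`, `β` bounded by `M` and `L`-Lipschitz,
`u` differentiable on `Ω` with square-integrable gradient and `v` measurable with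
`u − v` square integrable,
`∫_Ω |β(u) − β(v)|² |∇u|^(2(2−γ)) ≤ (2M)^(2(2−γ)) L^(2(γ−1)) (∫_Ω |∇u|²)^(2−γ) (∫_Ω |u−v|²)^(γ−1)`. -/
theorem beta_gradient_interpolation (n : ℕ) (Ω : Set (EuclideanSpace ℝ (Fin n)))
    (hΩ : MeasurableSet Ω) (γ M L : ℝ) (hγ₁ : 1 < γ) (hγ₂ : γ ≤ 2)
    (hM : 0 ≤ M) (hL : 0 ≤ L)
    (β : ℝ → ℝ) (hβM : ∀ s, |β s| ≤ M) (hβL : ∀ s r, |β s - β r| ≤ L * |s - r|)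
    (u v : EuclideanSpace ℝ (Fin n) → ℝ)
    (hu : ∀ x ∈ Ω, DifferentiableAt ℝ u x)
    (hu2 : IntegrableOn (fun x => ‖gradient u x‖ ^ 2) Ω)
    (hv : AEMeasurable v (volume.restrict Ω))
    (huv : IntegrableOn (fun x => (u x - v x) ^ 2) Ω) :
    ∫ x in Ω, |β (u x) - β (v x)| ^ 2 * ‖gradient u x‖ ^ (2 * (2 - γ)) ≤
      (2 * M) ^ (2 * (2 - γ)) * L ^ (2 * (γ - 1)) *
        (∫ x in Ω, ‖gradient u x‖ ^ 2) ^ (2 - γ) *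
        (∫ x in Ω, (u x - v x) ^ 2) ^ (γ - 1) := by
  set μ := volume.restrict Ω with hμ
  set f : EuclideanSpace ℝ (Fin n) → ℝ := fun x => ‖gradient u x‖ ^ 2 with hf
  set g : EuclideanSpace ℝ (Fin n) → ℝ := fun x => (u x - v x) ^ 2 with hg
  set h : EuclideanSpace ℝ (Fin n) → ℝ :=
    fun x => |β (u x) - β (v x)| ^ 2 * ‖gradient u x‖ ^ (2 * (2 - γ)) with hh
  have hθ0 : (0:ℝ) ≤ 2 - γ := by linarith
  have hθ1 : (0:ℝ) < γ - 1 := by linarith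
  set C : ℝ := (2 * M) ^ (2 * (2 - γ)) * L ^ (2 * (γ - 1)) with hC
  have hCnn : 0 ≤ C := mul_nonneg (rpow_nonneg (by linarith) _) (rpow_nonneg hL _)
  -- measurability
  have hfm : AEMeasurable f μ := hu2.aestronglyMeasurable.aemeasurable
  have hgm : AEMeasurable g μ := huv.aestronglyMeasurable.aemeasurable
  have hnorm : AEMeasurable (fun x => ‖gradient u x‖) μ := by
    have : (fun x => Real.sqrt (f x)) = fun x => ‖gradient u x‖ := by
      funext x; simp [hf, Real.sqrt_sq (norm_nonneg _)]
    rw [← this]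
    exact Real.continuous_sqrt.measurable.comp_aemeasurable hfm
  have hum : AEMeasurable u μ := by
    have huc : ContinuousOn u Ω := fun x hx => ((hu x hx).continuousAt).continuousWithinAt
    exact huc.aemeasurable hΩ
  have hβc : Continuous β := by
    have : LipschitzWith L.toNNReal β := by
      apply LipschitzWith.of_dist_le_mul
      intro s r
      rw [Real.dist_eq, Real.dist_eq, Real.coe_toNNReal L hL]
      exact hβL s r
    exact this.continuous
  have hdm : AEMeasurable (fun x => β (u x) - β (v x)) μ :=
    (hβc.measurable.comp_aemeasurable hum).sub (hβc.measurable.comp_aemeasurable hv)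
  have hhm : AEMeasurable h μ := by
    exact ((continuous_abs.measurable.comp_aemeasurable hdm).pow_const 2).mul
      (hnorm.pow_const _)
  -- nonnegativity
  have hfnn : ∀ x, 0 ≤ f x := fun x => sq_nonneg _
  have hgnn : ∀ x, 0 ≤ g x := fun x => sq_nonneg _
  have hhnn : ∀ x, 0 ≤ h x := fun x =>
    mul_nonneg (sq_nonneg _) (rpow_nonneg (norm_nonneg _) _)
  -- pointwise bound
  have hpt : ∀ x, h x ≤ C * (f x ^ (2 - γ) * g x ^ (γ - 1)) := by
    intro x
    set d : ℝ := |β (u x) - β (v x)| with hd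
    have hdnn : 0 ≤ d := abs_nonneg _
    have hd2M : d ≤ 2 * M := by
      calc d ≤ |β (u x)| + |β (v x)| := abs_sub _ _
        _ ≤ 2 * M := by have := hβM (u x); have := hβM (v x); linarith
    have hdL : d ≤ L * |u x - v x| := hβL _ _
    have hsplit : d ^ 2 = d ^ (2 * (2 - γ)) * d ^ (2 * (γ - 1)) := by
      rw [← Real.rpow_add' hdnn
        (by rw [show 2 * (2 - γ) + 2 * (γ - 1) = (2:ℝ) by ring]; norm_num)]
      rw [show 2 * (2 - γ) + 2 * (γ - 1) = (2:ℝ) by ring]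
      rw [show ((2:ℝ)) = ((2:ℕ):ℝ) by norm_num, Real.rpow_natCast]
    have h1 : d ^ (2 * (2 - γ)) ≤ (2 * M) ^ (2 * (2 - γ)) :=
      Real.rpow_le_rpow hdnn hd2M (by linarith)
    have h2 : d ^ (2 * (γ - 1)) ≤ L ^ (2 * (γ - 1)) * g x ^ (γ - 1) := by
      calc d ^ (2 * (γ - 1)) ≤ (L * |u x - v x|) ^ (2 * (γ - 1)) :=
            Real.rpow_le_rpow hdnn hdL (by linarith)
        _ = L ^ (2 * (γ - 1)) * |u x - v x| ^ (2 * (γ - 1)) :=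
            Real.mul_rpow hL (abs_nonneg _)
        _ = L ^ (2 * (γ - 1)) * g x ^ (γ - 1) := by
            congr 1
            have hgx : g x = |u x - v x| ^ ((2:ℝ)) := by
              rw [show ((2:ℝ)) = ((2:ℕ):ℝ) by norm_num, Real.rpow_natCast]
              simp [hg, sq_abs]
            rw [hgx, ← Real.rpow_mul (abs_nonneg _)]
    have h3 : ‖gradient u x‖ ^ (2 * (2 - γ)) = f x ^ (2 - γ) := by
      have hfx : f x = ‖gradient u x‖ ^ ((2:ℝ)) := by
        rw [show ((2:ℝ)) = ((2:ℕ):ℝ) by norm_num, Real.rpow_natCast]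
      rw [hfx, ← Real.rpow_mul (norm_nonneg _)]
    have : h x = d ^ (2 * (2 - γ)) * d ^ (2 * (γ - 1)) * f x ^ (2 - γ) := by
      have hhx : h x = d ^ (2:ℕ) * ‖gradient u x‖ ^ (2 * (2 - γ)) := rfl
      rw [hhx, h3, ← hsplit]
    rw [this, hC]
    calc d ^ (2 * (2 - γ)) * d ^ (2 * (γ - 1)) * f x ^ (2 - γ)
        ≤ (2 * M) ^ (2 * (2 - γ)) * (L ^ (2 * (γ - 1)) * g x ^ (γ - 1)) * f x ^ (2 - γ) := by
          apply mul_le_mul_of_nonneg_right _ (rpow_nonneg (hfnn x) _)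
          exact mul_le_mul h1 h2 (rpow_nonneg hdnn _) (rpow_nonneg (by linarith) _)
      _ = (2 * M) ^ (2 * (2 - γ)) * L ^ (2 * (γ - 1)) * (f x ^ (2 - γ) * g x ^ (γ - 1)) := by
          ring
  -- pass to lintegrals
  have key : ∫ x, h x ∂μ ≤ C * ((∫ x, f x ∂μ) ^ (2 - γ) * (∫ x, g x ∂μ) ^ (γ - 1)) := by
    have hP : ENNReal.ofReal (∫ x, f x ∂μ) = ∫⁻ x, ENNReal.ofReal (f x) ∂μ :=
      ofReal_integral_eq_lintegral_ofReal hu2 (Filter.Eventually.of_forall hfnn)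
    have hQ : ENNReal.ofReal (∫ x, g x ∂μ) = ∫⁻ x, ENNReal.ofReal (g x) ∂μ :=
      ofReal_integral_eq_lintegral_ofReal huv (Filter.Eventually.of_forall hgnn)
    have hPnn : 0 ≤ ∫ x, f x ∂μ := integral_nonneg hfnn
    have hQnn : 0 ≤ ∫ x, g x ∂μ := integral_nonneg hgnn
    rw [integral_eq_lintegral_of_nonneg_ae (Filter.Eventually.of_forall hhnn)
      hhm.aestronglyMeasurable]
    have hle : ∫⁻ x, ENNReal.ofReal (h x) ∂μ ≤
        ENNReal.ofReal C * ((ENNReal.ofReal (∫ x, f x ∂μ)) ^ (2 - γ) *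
          (ENNReal.ofReal (∫ x, g x ∂μ)) ^ (γ - 1)) := by
      calc ∫⁻ x, ENNReal.ofReal (h x) ∂μ
          ≤ ∫⁻ x, ENNReal.ofReal C *
              (ENNReal.ofReal (f x) ^ (2 - γ) * ENNReal.ofReal (g x) ^ (γ - 1)) ∂μ := by
            apply lintegral_mono
            intro x
            calc ENNReal.ofReal (h x)
                ≤ ENNReal.ofReal (C * (f x ^ (2 - γ) * g x ^ (γ - 1))) :=
                  ENNReal.ofReal_le_ofReal (hpt x)
              _ = ENNReal.ofReal C *
                  (ENNReal.ofReal (f x) ^ (2 - γ) * ENNReal.ofReal (g x) ^ (γ - 1)) := by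
                  rw [ENNReal.ofReal_mul hCnn, ENNReal.ofReal_mul (rpow_nonneg (hfnn x) _),
                    ENNReal.ofReal_rpow_of_nonneg (hfnn x) hθ0,
                    ENNReal.ofReal_rpow_of_nonneg (hgnn x) (le_of_lt hθ1)]
        _ = ENNReal.ofReal C *
            ∫⁻ x, ENNReal.ofReal (f x) ^ (2 - γ) * ENNReal.ofReal (g x) ^ (γ - 1) ∂μ :=
            lintegral_const_mul' _ _ ENNReal.ofReal_ne_top
        _ ≤ ENNReal.ofReal C * ((∫⁻ x, ENNReal.ofReal (f x) ∂μ) ^ (2 - γ) *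
            (∫⁻ x, ENNReal.ofReal (g x) ∂μ) ^ (γ - 1)) := by
            apply mul_le_mul_right
            have := aux_holder μ hθ0 (by linarith : (2 - γ) < 1)
              (hfm.ennreal_ofReal) (hgm.ennreal_ofReal)
            simpa [show (1 : ℝ) - (2 - γ) = γ - 1 by ring] using this
        _ = ENNReal.ofReal C * ((ENNReal.ofReal (∫ x, f x ∂μ)) ^ (2 - γ) *
            (ENNReal.ofReal (∫ x, g x ∂μ)) ^ (γ - 1)) := by rw [hP, hQ]
    calc (∫⁻ x, ENNReal.ofReal (h x) ∂μ).toReal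
        ≤ (ENNReal.ofReal C * ((ENNReal.ofReal (∫ x, f x ∂μ)) ^ (2 - γ) *
            (ENNReal.ofReal (∫ x, g x ∂μ)) ^ (γ - 1))).toReal := by
          apply ENNReal.toReal_mono _ hle
          apply ENNReal.mul_ne_top ENNReal.ofReal_ne_top
          exact ENNReal.mul_ne_top (ENNReal.rpow_ne_top_of_nonneg hθ0 ENNReal.ofReal_ne_top)
            (ENNReal.rpow_ne_top_of_nonneg (le_of_lt hθ1) ENNReal.ofReal_ne_top)
      _ = C * ((∫ x, f x ∂μ) ^ (2 - γ) * (∫ x, g x ∂μ) ^ (γ - 1)) := by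
          rw [ENNReal.toReal_mul, ENNReal.toReal_mul, ← ENNReal.toReal_rpow,
            ← ENNReal.toReal_rpow, ENNReal.toReal_ofReal hCnn,
            ENNReal.toReal_ofReal hPnn, ENNReal.toReal_ofReal hQnn]
  calc ∫ x in Ω, h x = ∫ x, h x ∂μ := rfl
    _ ≤ C * ((∫ x, f x ∂μ) ^ (2 - γ) * (∫ x, g x ∂μ) ^ (γ - 1)) := key
    _ = (2 * M) ^ (2 * (2 - γ)) * L ^ (2 * (γ - 1)) *
        (∫ x in Ω, f x) ^ (2 - γ) * (∫ x in Ω, g x) ^ (γ - 1) := by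
        rw [hC]; ring
end

section
/- Let Ω ⊆ ℝⁿ be a measurable set of finite Lebesgue measure |Ω|, let γ ∈ (1,2], let ω : Ω → ℝⁿ be measurable with |ω(x)| ≤ W a.e. (W ≥ 0), let β : ℝ → ℝ satisfy |β(s)| ≤ M for all s (M ≥ 0), and let u : ℝⁿ → ℝ be differentiable at every point of Ω with ∫_Ω |∇u|² dx < ∞. Define f₂[u](x) := (ω(x)·∇u(x) + β(u(x)) |∇u(x)|^{2−γ})₋. Then ‖f₂[u]‖_{L²(Ω)} ≤ √2 ( W ‖∇u‖_{L²(Ω)} + M |Ω|^{(γ−1)/2} ‖∇u‖_{L²(Ω)}^{2−γ} ). -/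
open MeasureTheory Real

private lemma sqrt_add_le' (a b : ℝ) (ha : 0 ≤ a) (hb : 0 ≤ b) :
    Real.sqrt (a + b) ≤ Real.sqrt a + Real.sqrt b := by
  rw [← Real.sqrt_sq (by positivity : (0:ℝ) ≤ Real.sqrt a + Real.sqrt b)]
  apply Real.sqrt_le_sqrt
  nlinarith [Real.sq_sqrt ha, Real.sq_sqrt hb, Real.sqrt_nonneg a, Real.sqrt_nonneg b]

set_option maxHeartbeats 1000000 in
/-- Lemma 2.3 of the paper: with
`f₂[u](x) = (ω(x)·∇u(x) + β(u(x)) |∇u(x)|^(2−γ))₋`, `|ω| ≤ W` a.e. on `Ω`,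
`|β| ≤ M`, and `γ ∈ (1,2]`,
`‖f₂[u]‖_{L²(Ω)} ≤ √2 (W ‖∇u‖_{L²(Ω)} + M |Ω|^((γ−1)/2) ‖∇u‖_{L²(Ω)}^(2−γ))`. -/
theorem convective_term_L2_bound (n : ℕ) (Ω : Set (EuclideanSpace ℝ (Fin n)))
    (hΩ : MeasurableSet Ω) (hΩfin : volume Ω < ⊤)
    (γ W M : ℝ) (hγ₁ : 1 < γ) (hγ₂ : γ ≤ 2) (hW : 0 ≤ W) (hM : 0 ≤ M)
    (ω : EuclideanSpace ℝ (Fin n) → EuclideanSpace ℝ (Fin n))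
    (hωm : AEMeasurable ω (volume.restrict Ω))
    (hω : ∀ᵐ x ∂(volume.restrict Ω), ‖ω x‖ ≤ W)
    (β : ℝ → ℝ) (hβ : ∀ s, |β s| ≤ M)
    (u : EuclideanSpace ℝ (Fin n) → ℝ)
    (hu : ∀ x ∈ Ω, DifferentiableAt ℝ u x)
    (hu2 : IntegrableOn (fun x => ‖gradient u x‖ ^ 2) Ω) :
    (∫ x in Ω,
        (max (-((inner ℝ (ω x) (gradient u x) : ℝ) +
          β (u x) * ‖gradient u x‖ ^ (2 - γ))) 0) ^ 2) ^ ((1 : ℝ) / 2) ≤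
      Real.sqrt 2 *
        (W * (∫ x in Ω, ‖gradient u x‖ ^ 2) ^ ((1 : ℝ) / 2) +
          M * (volume Ω).toReal ^ ((γ - 1) / 2) *
            ((∫ x in Ω, ‖gradient u x‖ ^ 2) ^ ((1 : ℝ) / 2)) ^ (2 - γ)) := by
  haveI hfin : IsFiniteMeasure (volume.restrict Ω) :=
    ⟨by simpa [Measure.restrict_apply_univ] using hΩfin⟩
  set μ := volume.restrict Ω with hμ
  set g : EuclideanSpace ℝ (Fin n) → ℝ := fun x => ‖gradient u x‖ with hgdef
  have hg0 : ∀ x, 0 ≤ g x := fun x => norm_nonneg _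
  have hgmeas : Measurable g :=
    (((InnerProductSpace.toDual ℝ (EuclideanSpace ℝ (Fin n))).symm.continuous.measurable).comp
      (measurable_fderiv ℝ u)).norm
  set G : ℝ := ∫ x in Ω, g x ^ 2 with hGdef
  have hG0 : 0 ≤ G := integral_nonneg fun x => sq_nonneg _
  set T : ℝ := (volume Ω).toReal with hTdef
  have hT0 : 0 ≤ T := ENNReal.toReal_nonneg
  set f : EuclideanSpace ℝ (Fin n) → ℝ := fun x =>
    (max (-((inner ℝ (ω x) (gradient u x) : ℝ) + β (u x) * g x ^ (2 - γ))) 0) ^ 2 with hfdef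
  -- the RHS is nonnegative
  have hRHS0 : 0 ≤ Real.sqrt 2 *
      (W * G ^ ((1 : ℝ) / 2) + M * T ^ ((γ - 1) / 2) * (G ^ ((1 : ℝ) / 2)) ^ (2 - γ)) := by
    have h1 : 0 ≤ G ^ ((1:ℝ)/2) := Real.rpow_nonneg hG0 _
    have h2 : 0 ≤ (G ^ ((1:ℝ)/2)) ^ (2 - γ) := Real.rpow_nonneg h1 _
    have h3 : 0 ≤ T ^ ((γ-1)/2) := Real.rpow_nonneg hT0 _
    positivity
  by_cases hInt : Integrable f μ
  · -- main case
    set τ : ℝ := 2 * (2 - γ) with hτdef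
    have hτ0 : 0 ≤ τ := by nlinarith
    have hτ2 : τ ≤ 2 := by nlinarith
    -- pointwise bound
    have hpt : ∀ᵐ x ∂μ, f x ≤ 2 * (W ^ 2 * g x ^ 2 + M ^ 2 * g x ^ τ) := by
      filter_upwards [hω] with x hx
      set a : ℝ := inner ℝ (ω x) (gradient u x) with hadef
      set h : ℝ := g x ^ (2 - γ) with hhdef
      have hh0 : 0 ≤ h := Real.rpow_nonneg (hg0 x) _
      have ha : |a| ≤ W * g x :=
        (abs_real_inner_le_norm _ _).trans (mul_le_mul_of_nonneg_right hx (hg0 x))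
      have hb : |β (u x) * h| ≤ M * h := by
        rw [abs_mul, abs_of_nonneg hh0]
        exact mul_le_mul_of_nonneg_right (hβ _) hh0
      have hmax : max (-(a + β (u x) * h)) 0 ≤ W * g x + M * h := by
        apply max_le
        · have := neg_abs_le a
          have := neg_abs_le (β (u x) * h)
          have := abs_le.1 ha
          have := abs_le.1 hb
          linarith [(abs_le.1 ha).1, (abs_le.1 hb).1]
        · have h1 : 0 ≤ W * g x := mul_nonneg hW (hg0 x)
          have h2 : 0 ≤ M * h := mul_nonneg hM hh0
          linarith
      have hsq : f x ≤ (W * g x + M * h) ^ 2 :=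
        pow_le_pow_left₀ (le_max_right _ _) hmax 2
      have hh2 : h ^ 2 = g x ^ τ := by
        rw [hhdef, ← Real.rpow_natCast (g x ^ (2 - γ)) 2, ← Real.rpow_mul (hg0 x)]
        norm_num [hτdef]; ring_nf
      nlinarith [sq_nonneg (W * g x - M * h), hsq, hh2]
    -- integrability of g ^ τ
    have hgτmeas : Measurable fun x => g x ^ τ := (Real.continuous_rpow_const hτ0).measurable.comp hgmeas
    have hgτint : Integrable (fun x => g x ^ τ) μ := by
      refine Integrable.mono' ((integrable_const (1:ℝ)).add hu2) hgτmeas.aestronglyMeasurable ?_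
      refine Filter.Eventually.of_forall fun x => ?_
      rw [Real.norm_of_nonneg (Real.rpow_nonneg (hg0 x) _)]
      simp only [Pi.add_apply]
      rcases le_or_gt (g x) 1 with h1 | h1
      · have : g x ^ τ ≤ 1 := Real.rpow_le_one (hg0 x) h1 hτ0
        nlinarith [sq_nonneg (g x)]
      · have : g x ^ τ ≤ g x ^ (2:ℝ) :=
          Real.rpow_le_rpow_of_exponent_le h1.le hτ2
        rw [Real.rpow_two] at this
        nlinarith [sq_nonneg (g x)]
    -- Hölder: ∫ g^τ ≤ T^(γ-1) * G^(2-γ)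
    have hholder : ∫ x in Ω, g x ^ τ ≤ T ^ (γ - 1) * G ^ (2 - γ) := by
      rcases eq_or_lt_of_le hγ₂ with h2 | h2
    -- γ = 2
      · have hτz : τ = 0 := by rw [hτdef, ← h2]; ring
        simp only [hτz, Real.rpow_zero]
        have e0 : (∫ _x in Ω, (1:ℝ)) = T := by
          simp [hTdef, Measure.restrict_apply_univ, measureReal_def]
        rw [e0, show γ - 1 = 1 by rw [h2]; norm_num,
          show (2:ℝ) - γ = 0 by rw [h2]; norm_num, Real.rpow_one, Real.rpow_zero, mul_one]
      · -- γ < 2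
        have h2γ : 0 < 2 - γ := by linarith
        have hγ1 : 0 < γ - 1 := by linarith
        have hpq : Real.HolderConjugate (1/(2-γ)) (1/(γ-1)) := by
          rw [Real.holderConjugate_iff]
          constructor
          · rw [lt_div_iff₀ h2γ]; linarith
          · rw [one_div, one_div, inv_inv, inv_inv]; ring
        have hf2 : MemLp (gradient u) 2 μ := by
          refine (memLp_two_iff_integrable_sq_norm ?_).2 hu2
          exact (((InnerProductSpace.toDual ℝ
            (EuclideanSpace ℝ (Fin n))).symm.continuous.measurable).comp
            (measurable_fderiv ℝ u)).aestronglyMeasurable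
        have hτpos : 0 < τ := by rw [hτdef]; nlinarith
        have hfLp : MemLp (fun x => g x ^ τ) (ENNReal.ofReal (1/(2-γ))) μ := by
          have hq0 : (ENNReal.ofReal τ) ≠ 0 := ne_of_gt (ENNReal.ofReal_pos.2 hτpos)
          have hqt : (ENNReal.ofReal τ) ≠ ⊤ := ENNReal.ofReal_ne_top
          have hmem := (memLp_norm_rpow_iff hf2.aestronglyMeasurable hq0 hqt).2 hf2
          have heq : (2 : ENNReal) / ENNReal.ofReal τ = ENNReal.ofReal (1/(2-γ)) := by
            rw [show (2:ENNReal) = ENNReal.ofReal 2 by norm_num,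
              ← ENNReal.ofReal_div_of_pos hτpos]
            congr 1
            rw [hτdef]
            field_simp
          rw [heq, ENNReal.toReal_ofReal hτ0] at hmem
          exact hmem
        have hgLp : MemLp (fun _ => (1:ℝ)) (ENNReal.ofReal (1/(γ-1))) μ := memLp_const 1
        have key := integral_mul_le_Lp_mul_Lq_of_nonneg hpq
          (Filter.Eventually.of_forall fun x => Real.rpow_nonneg (hg0 x) τ)
          (Filter.Eventually.of_forall fun _ => zero_le_one) hfLp hgLp
        simp only [mul_one, Real.one_rpow] at key
        have e1 : ∫ x, (g x ^ τ) ^ (1/(2-γ)) ∂μ = G := by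
          rw [hGdef]
          refine integral_congr_ae (Filter.Eventually.of_forall fun x => ?_)
          show (g x ^ τ) ^ (1/(2-γ)) = g x ^ 2
          rw [← Real.rpow_natCast (g x) 2, ← Real.rpow_mul (hg0 x)]
          congr 1
          rw [hτdef]; field_simp; norm_num
        have e2 : (∫ _x, (1:ℝ) ∂μ) = T := by
          rw [integral_const, smul_eq_mul, mul_one, hμ, measureReal_restrict_apply_univ, measureReal_def, hTdef]
        rw [e1, e2] at key
        have e3 : (1:ℝ)/(1/(2-γ)) = 2 - γ := by field_simp
        have e4 : (1:ℝ)/(1/(γ-1)) = γ - 1 := by field_simp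
        rw [e3, e4] at key
        calc ∫ x in Ω, g x ^ τ = ∫ x, g x ^ τ ∂μ := rfl
          _ ≤ G ^ (2-γ) * T ^ (γ-1) := key
          _ = T ^ (γ-1) * G ^ (2-γ) := mul_comm _ _
    -- combine integrals
    have hbint : Integrable (fun x => 2 * (W ^ 2 * g x ^ 2 + M ^ 2 * g x ^ τ)) μ :=
      (((hu2.const_mul (W^2)).add (hgτint.const_mul (M^2))).const_mul 2)
    have hint_le : ∫ x in Ω, f x ≤ 2 * (W ^ 2 * G + M ^ 2 * (T ^ (γ-1) * G ^ (2-γ))) := by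
      calc ∫ x in Ω, f x ≤ ∫ x in Ω, 2 * (W ^ 2 * g x ^ 2 + M ^ 2 * g x ^ τ) :=
            integral_mono_ae hInt hbint hpt
        _ = 2 * (W ^ 2 * G + M ^ 2 * ∫ x in Ω, g x ^ τ) := by
            rw [integral_const_mul, integral_add (hu2.const_mul (W^2)) (hgτint.const_mul (M^2)),
              integral_const_mul, integral_const_mul]
        _ ≤ 2 * (W ^ 2 * G + M ^ 2 * (T ^ (γ-1) * G ^ (2-γ))) := by
            have : M ^ 2 * ∫ x in Ω, g x ^ τ ≤ M ^ 2 * (T ^ (γ-1) * G ^ (2-γ)) :=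
              mul_le_mul_of_nonneg_left hholder (sq_nonneg M)
            linarith
    -- now take square roots
    have hf0 : 0 ≤ ∫ x in Ω, f x := integral_nonneg fun x => sq_nonneg _
    have step : (∫ x in Ω, f x) ^ ((1:ℝ)/2) ≤
        (2 * (W ^ 2 * G + M ^ 2 * (T ^ (γ-1) * G ^ (2-γ)))) ^ ((1:ℝ)/2) :=
      Real.rpow_le_rpow hf0 hint_le (by norm_num)
    refine le_trans step ?_
    rw [← Real.sqrt_eq_rpow]
    have hA0 : 0 ≤ W ^ 2 * G := by positivity
    have hB0 : 0 ≤ M ^ 2 * (T ^ (γ-1) * G ^ (2-γ)) :=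
      mul_nonneg (sq_nonneg M) (mul_nonneg (Real.rpow_nonneg hT0 _) (Real.rpow_nonneg hG0 _))
    rw [Real.sqrt_mul (by norm_num : (0:ℝ) ≤ 2)]
    refine mul_le_mul_of_nonneg_left ?_ (Real.sqrt_nonneg 2)
    refine le_trans (sqrt_add_le' _ _ hA0 hB0) ?_
    have eA : Real.sqrt (W ^ 2 * G) = W * G ^ ((1:ℝ)/2) := by
      rw [Real.sqrt_mul (sq_nonneg W), Real.sqrt_sq hW, Real.sqrt_eq_rpow]
    have eB : Real.sqrt (M ^ 2 * (T ^ (γ-1) * G ^ (2-γ))) =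
        M * T ^ ((γ-1)/2) * (G ^ ((1:ℝ)/2)) ^ (2-γ) := by
      have h1 : (G ^ ((1:ℝ)/2)) ^ (2-γ) = G ^ ((2-γ)/2) := by
        rw [← Real.rpow_mul hG0]; ring_nf
      rw [h1]
      have h2 : M ^ 2 * (T ^ (γ-1) * G ^ (2-γ)) = (M * T ^ ((γ-1)/2) * G ^ ((2-γ)/2)) ^ 2 := by
        rw [mul_pow, mul_pow, ← Real.rpow_natCast (T ^ ((γ-1)/2)) 2,
          ← Real.rpow_natCast (G ^ ((2-γ)/2)) 2, ← Real.rpow_mul hT0, ← Real.rpow_mul hG0]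
        norm_num
        ring
      rw [h2, Real.sqrt_sq (by positivity)]
    rw [eA, eB]
  · -- integrand not integrable: integral is zero
    rw [integral_undef hInt, Real.zero_rpow (by norm_num)]
    exact hRHS0
end

section
/- Let Ω ⊆ ℝⁿ be a measurable set of finite Lebesgue measure |Ω|, let γ ∈ (1,2), let ω : Ω → ℝⁿ be measurable with |ω(x)| ≤ W a.e., and let β : ℝ → ℝ satisfy |β(s)| ≤ M and |β(s) − β(r)| ≤ L|s − r| for all s, r. Define, for u : ℝⁿ → ℝ differentiable at every point of Ω, f₂[u](x) := (ω(x)·∇u(x) + β(u(x)) |∇u(x)|^{2−γ})₋. Then there exists a constant C > 0, depending only on |Ω|, W, M, L, and γ, such that for every u, v : ℝⁿ → ℝ differentiable at every point of Ω with ∫_Ω |∇u|², ∫_Ω |∇v|², ∫_Ω |u − v|² all finite, one has ‖f₂[u] − f₂[v]‖_{L²(Ω)} ≤ C ( ‖∇u − ∇v‖_{L²(Ω)} + ‖∇u − ∇v‖_{L²(Ω)}^{2−γ} + ‖∇u‖_{L²(Ω)}^{2−γ} ‖u − v‖_{L²(Ω)}^{γ−1} ). -/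
open MeasureTheory Real
open scoped ENNReal NNReal

private lemma aux_rpow_add_le {a b p : ℝ} (ha : 0 ≤ a) (hb : 0 ≤ b) (hp : 0 ≤ p) (hp1 : p ≤ 1) :
    (a + b) ^ p ≤ a ^ p + b ^ p := by
  have := NNReal.rpow_add_le_add_rpow a.toNNReal b.toNNReal hp hp1
  rw [← Real.toNNReal_add ha hb] at this
  have h2 := NNReal.coe_le_coe.2 this
  push_cast at h2
  rwa [Real.coe_toNNReal _ ha, Real.coe_toNNReal _ hb,
    Real.coe_toNNReal _ (add_nonneg ha hb)] at h2

private lemma aux_abs_rpow_sub {x y p : ℝ} (hx : 0 ≤ x) (hy : 0 ≤ y) (hp : 0 ≤ p) (hp1 : p ≤ 1) :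
    |x ^ p - y ^ p| ≤ |x - y| ^ p := by
  wlog h : y ≤ x generalizing x y
  · rw [abs_sub_comm, abs_sub_comm x y]; exact this hy hx (le_of_not_ge h)
  have h1 : x ^ p ≤ (x - y) ^ p + y ^ p := by
    have := aux_rpow_add_le (sub_nonneg.2 h) hy hp hp1
    calc x ^ p = ((x - y) + y) ^ p := by ring_nf
    _ ≤ (x - y) ^ p + y ^ p := this
  rw [abs_of_nonneg (by linarith : (0:ℝ) ≤ x - y),
    abs_of_nonneg (sub_nonneg.2 (Real.rpow_le_rpow hy h hp))]
  linarith

private lemma aux_min_le_rpow_mul {A B p q : ℝ} (hA : 0 ≤ A) (hB : 0 ≤ B)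
    (hp : 0 ≤ p) (hq : 0 ≤ q) (hpq : p + q = 1) : min A B ≤ A ^ p * B ^ q := by
  have hm : 0 ≤ min A B := le_min hA hB
  calc min A B = min A B ^ p * min A B ^ q := by
        rw [← Real.rpow_add' hm (by rw [hpq]; norm_num), hpq, Real.rpow_one]
    _ ≤ A ^ p * B ^ q := by
        gcongr
        · exact min_le_left _ _
        · exact min_le_right _ _

private lemma aux_meas_gradient {n : ℕ} (u : EuclideanSpace ℝ (Fin n) → ℝ) :
    Measurable (gradient u) :=
  ((InnerProductSpace.toDual ℝ (EuclideanSpace ℝ (Fin n))).symm.continuous.measurable).comp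
    (measurable_fderiv ℝ u)

private lemma aux_sq_add_le (x y : ℝ≥0∞) : (x + y) ^ (2:ℝ) ≤ 3 * (x ^ (2:ℝ) + y ^ (2:ℝ)) := by
  have h2 : ∀ z : ℝ≥0∞, z ^ (2:ℝ) = z ^ (2:ℕ) := fun z => by
    rw [← ENNReal.rpow_natCast]; norm_num
  rw [h2, h2, h2]
  have hxy : x * y ≤ x ^ 2 + y ^ 2 := by
    rcases le_total x y with h | h
    · calc x * y ≤ y * y := by gcongr
        _ = y ^ 2 := (sq y).symm
        _ ≤ x ^ 2 + y ^ 2 := le_add_self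
    · calc x * y ≤ x * x := by gcongr
        _ = x ^ 2 := (sq x).symm
        _ ≤ x ^ 2 + y ^ 2 := le_self_add
  calc (x + y) ^ 2 = x ^ 2 + (x * y + x * y) + y ^ 2 := by ring
    _ ≤ x ^ 2 + ((x ^ 2 + y ^ 2) + (x ^ 2 + y ^ 2)) + y ^ 2 := by gcongr
    _ = 3 * (x ^ 2 + y ^ 2) := by ring

private lemma aux_holder_s4 {α : Type*} [MeasurableSpace α] (μ : Measure α) {f g : α → ℝ≥0∞}
    (hf : AEMeasurable f μ) (hg : AEMeasurable g μ) {s t : ℝ}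
    (hs : 0 < s) (ht : 0 < t) (hst : s + t = 1) :
    ∫⁻ x, f x ^ s * g x ^ t ∂μ ≤ (∫⁻ x, f x ∂μ) ^ s * (∫⁻ x, g x ∂μ) ^ t := by
  have hconj : (1/s).HolderConjugate (1/t) := by
    constructor
    · simp only [one_div, inv_inv, inv_one]; exact hst
    · positivity
    · positivity
  have hfs : AEMeasurable (fun x => f x ^ s) μ := hf.pow_const s
  have hgt : AEMeasurable (fun x => g x ^ t) μ := hg.pow_const t
  have h := ENNReal.lintegral_mul_le_Lp_mul_Lq μ hconj hfs hgt
  simp only [Pi.mul_apply] at h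
  calc ∫⁻ x, f x ^ s * g x ^ t ∂μ ≤
      (∫⁻ x, (f x ^ s) ^ (1/s) ∂μ) ^ (1/(1/s)) * (∫⁻ x, (g x ^ t) ^ (1/t) ∂μ) ^ (1/(1/t)) := by
        simpa [one_div, one_div] using h
    _ = (∫⁻ x, f x ∂μ) ^ s * (∫⁻ x, g x ∂μ) ^ t := by
        rw [one_div_one_div, one_div_one_div]
        congr 1
        · rw [lintegral_congr fun x => by
            rw [← ENNReal.rpow_mul, mul_one_div_cancel hs.ne', ENNReal.rpow_one]]
        · rw [lintegral_congr fun x => by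
            rw [← ENNReal.rpow_mul, mul_one_div_cancel ht.ne', ENNReal.rpow_one]]

private lemma aux_ptwise {γ W M L : ℝ} (hγ₁ : 1 < γ) (hγ₂ : γ < 2)
    {β : ℝ → ℝ} (hM : ∀ s, |β s| ≤ M) (hL : ∀ s r, |β s - β r| ≤ L * |s - r|)
    {n : ℕ} (ω gu gv : EuclideanSpace ℝ (Fin n)) (su sv : ℝ)
    (hω : ‖ω‖ ≤ W) :
    |max (-((inner ℝ ω gu : ℝ) + β su * ‖gu‖ ^ (2 - γ))) 0 -
      max (-((inner ℝ ω gv : ℝ) + β sv * ‖gv‖ ^ (2 - γ))) 0| ≤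
      (max W 0) * ‖gu - gv‖ + (max M 0) * ‖gu - gv‖ ^ (2 - γ) +
      ((2 * max M 0) ^ (2 - γ) * (max L 0) ^ (γ - 1)) *
        (|su - sv| ^ (γ - 1) * ‖gu‖ ^ (2 - γ)) := by
  set p := 2 - γ with hp
  set q := γ - 1 with hq
  have hp0 : 0 ≤ p := by simp [hp]; linarith
  have hp1 : p ≤ 1 := by simp [hp]; linarith
  have hq0 : 0 ≤ q := by simp [hq]; linarith
  set A₁ := (inner ℝ ω gu : ℝ) + β su * ‖gu‖ ^ p with hA₁
  set A₂ := (inner ℝ ω gv : ℝ) + β sv * ‖gv‖ ^ p with hA₂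
  have step1 : |max (-A₁) 0 - max (-A₂) 0| ≤ |A₁ - A₂| := by
    calc |max (-A₁) 0 - max (-A₂) 0| ≤ |(-A₁) - (-A₂)| := abs_max_sub_max_le_abs _ _ _
      _ = |A₁ - A₂| := by rw [neg_sub_neg, abs_sub_comm]
  have hdecomp : A₁ - A₂ = (inner ℝ ω (gu - gv) : ℝ) + (β su - β sv) * ‖gu‖ ^ p +
      β sv * (‖gu‖ ^ p - ‖gv‖ ^ p) := by
    rw [hA₁, hA₂, inner_sub_right]; ring
  have t1 : |(inner ℝ ω (gu - gv) : ℝ)| ≤ max W 0 * ‖gu - gv‖ := by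
    calc |(inner ℝ ω (gu - gv) : ℝ)| ≤ ‖ω‖ * ‖gu - gv‖ := abs_real_inner_le_norm _ _
      _ ≤ max W 0 * ‖gu - gv‖ := by
          apply mul_le_mul_of_nonneg_right _ (norm_nonneg _)
          exact le_trans hω (le_max_left _ _)
  have t2 : |β su - β sv| ≤ (2 * max M 0) ^ p * (max L 0) ^ q * |su - sv| ^ q := by
    have hb : |β su - β sv| ≤ min (2 * max M 0) (max L 0 * |su - sv|) := by
      apply le_min
      · calc |β su - β sv| ≤ |β su| + |β sv| := abs_sub _ _
          _ ≤ M + M := add_le_add (hM su) (hM sv)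
          _ ≤ 2 * max M 0 := by
              have := le_max_left M 0; linarith
      · calc |β su - β sv| ≤ L * |su - sv| := hL su sv
          _ ≤ max L 0 * |su - sv| := by
              apply mul_le_mul_of_nonneg_right (le_max_left _ _) (abs_nonneg _)
    calc |β su - β sv| ≤ min (2 * max M 0) (max L 0 * |su - sv|) := hb
      _ ≤ (2 * max M 0) ^ p * (max L 0 * |su - sv|) ^ q := by
          apply aux_min_le_rpow_mul (by positivity) (by positivity) hp0 hq0
          simp [hp, hq]; ring
      _ = (2 * max M 0) ^ p * (max L 0) ^ q * |su - sv| ^ q := by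
          rw [Real.mul_rpow (le_max_right _ _) (abs_nonneg _)]; ring
  have t3 : |‖gu‖ ^ p - ‖gv‖ ^ p| ≤ ‖gu - gv‖ ^ p := by
    calc |‖gu‖ ^ p - ‖gv‖ ^ p| ≤ |‖gu‖ - ‖gv‖| ^ p :=
          aux_abs_rpow_sub (norm_nonneg _) (norm_nonneg _) hp0 hp1
      _ ≤ ‖gu - gv‖ ^ p := by
          apply Real.rpow_le_rpow (abs_nonneg _) (abs_norm_sub_norm_le _ _) hp0
  have hβv : |β sv| ≤ max M 0 := le_trans (hM sv) (le_max_left _ _)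
  calc |max (-A₁) 0 - max (-A₂) 0| ≤ |A₁ - A₂| := step1
    _ ≤ |(inner ℝ ω (gu - gv) : ℝ)| + |(β su - β sv) * ‖gu‖ ^ p| +
        |β sv * (‖gu‖ ^ p - ‖gv‖ ^ p)| := by
        rw [hdecomp]; exact le_trans (abs_add_le _ _) (by gcongr; exact abs_add_le _ _)
    _ ≤ max W 0 * ‖gu - gv‖ +
        ((2 * max M 0) ^ p * (max L 0) ^ q * |su - sv| ^ q) * ‖gu‖ ^ p +
        max M 0 * ‖gu - gv‖ ^ p := by
        refine add_le_add (add_le_add t1 ?_) ?_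
        · rw [abs_mul, abs_of_nonneg (Real.rpow_nonneg (norm_nonneg _) _)]
          exact mul_le_mul_of_nonneg_right t2 (Real.rpow_nonneg (norm_nonneg _) _)
        · rw [abs_mul]
          exact mul_le_mul hβv t3 (abs_nonneg _) (le_max_right _ _)
    _ = max W 0 * ‖gu - gv‖ + max M 0 * ‖gu - gv‖ ^ p +
        ((2 * max M 0) ^ p * (max L 0) ^ q) * (|su - sv| ^ q * ‖gu‖ ^ p) := by ring

/-- Lemma 2.5 of the paper, case `γ ∈ (1,2)`: with
`f₂[w](x) = (ω(x)·∇w(x) + β(w(x)) |∇w(x)|^(2−γ))₋`, there is a constant `C > 0`,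
depending only on `|Ω|`, `W`, `M`, `L`, `γ`, such that for all admissible `u, v`,
`‖f₂[u] − f₂[v]‖_{L²(Ω)} ≤ C (‖∇u − ∇v‖_{L²} + ‖∇u − ∇v‖_{L²}^(2−γ)
  + ‖∇u‖_{L²}^(2−γ) ‖u − v‖_{L²}^(γ−1))`. -/
theorem convective_term_holder_continuity (n : ℕ) (Ω : Set (EuclideanSpace ℝ (Fin n)))
    (hΩ : MeasurableSet Ω) (hΩfin : volume Ω < ⊤)
    (γ W M L : ℝ) (hγ₁ : 1 < γ) (hγ₂ : γ < 2) :
    ∃ C > 0, ∀ (ω : EuclideanSpace ℝ (Fin n) → EuclideanSpace ℝ (Fin n))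
      (β : ℝ → ℝ) (u v : EuclideanSpace ℝ (Fin n) → ℝ),
      AEMeasurable ω (volume.restrict Ω) →
      (∀ᵐ x ∂(volume.restrict Ω), ‖ω x‖ ≤ W) →
      (∀ s, |β s| ≤ M) → (∀ s r, |β s - β r| ≤ L * |s - r|) →
      (∀ x ∈ Ω, DifferentiableAt ℝ u x) → (∀ x ∈ Ω, DifferentiableAt ℝ v x) →
      IntegrableOn (fun x => ‖gradient u x‖ ^ 2) Ω →
      IntegrableOn (fun x => ‖gradient v x‖ ^ 2) Ω →
      IntegrableOn (fun x => (u x - v x) ^ 2) Ω →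
      (∫ x in Ω,
          ((max (-((inner ℝ (ω x) (gradient u x) : ℝ) +
              β (u x) * ‖gradient u x‖ ^ (2 - γ))) 0) -
            (max (-((inner ℝ (ω x) (gradient v x) : ℝ) +
              β (v x) * ‖gradient v x‖ ^ (2 - γ))) 0)) ^ 2) ^ ((1 : ℝ) / 2) ≤
        C * ((∫ x in Ω, ‖gradient u x - gradient v x‖ ^ 2) ^ ((1 : ℝ) / 2) +
          ((∫ x in Ω, ‖gradient u x - gradient v x‖ ^ 2) ^ ((1 : ℝ) / 2)) ^ (2 - γ) +
          ((∫ x in Ω, ‖gradient u x‖ ^ 2) ^ ((1 : ℝ) / 2)) ^ (2 - γ) *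
            ((∫ x in Ω, (u x - v x) ^ 2) ^ ((1 : ℝ) / 2)) ^ (γ - 1)) := by
  have hp0 : (0:ℝ) ≤ 2 - γ := by linarith
  have hp0' : (0:ℝ) < 2 - γ := by linarith
  have hq0 : (0:ℝ) ≤ γ - 1 := by linarith
  have hq0' : (0:ℝ) < γ - 1 := by linarith
  set Wp := max W 0 with hWp
  set Mp := max M 0 with hMp
  set Lp := max L 0 with hLp
  set K₁ := (2 * Mp) ^ (2-γ) * Lp ^ (γ-1) with hK₁
  set vΩ := (volume Ω).toReal with hvΩ
  have hWp0 : 0 ≤ Wp := le_max_right _ _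
  have hMp0 : 0 ≤ Mp := le_max_right _ _
  have hLp0 : 0 ≤ Lp := le_max_right _ _
  have hK₁0 : 0 ≤ K₁ := mul_nonneg (Real.rpow_nonneg (by linarith) _) (Real.rpow_nonneg hLp0 _)
  have hvΩr0 : 0 ≤ vΩ ^ ((γ-1)/2) := Real.rpow_nonneg ENNReal.toReal_nonneg _
  have hMvΩ0 : 0 ≤ Mp * vΩ ^ ((γ-1)/2) := mul_nonneg hMp0 hvΩr0
  set C := 1 + Wp + Mp * vΩ ^ ((γ-1)/2) + K₁ with hC
  have hC0 : 0 < C := by rw [hC]; linarith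
  refine ⟨C, hC0, ?_⟩
  intro ω β u v hω hωW hM hL hud hvd hIu hIv hIuv
  set μ := volume.restrict Ω with hμ
  -- measurability
  have hmgu : Measurable (gradient u) := aux_meas_gradient u
  have hmgv : Measurable (gradient v) := aux_meas_gradient v
  set D : EuclideanSpace ℝ (Fin n) → ℝ≥0∞ :=
    fun x => ENNReal.ofReal ‖gradient u x - gradient v x‖ with hDdef
  set GU : EuclideanSpace ℝ (Fin n) → ℝ≥0∞ :=
    fun x => ENNReal.ofReal ‖gradient u x‖ with hGUdef
  set GV : EuclideanSpace ℝ (Fin n) → ℝ≥0∞ :=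
    fun x => ENNReal.ofReal ‖gradient v x‖ with hGVdef
  set Ee : EuclideanSpace ℝ (Fin n) → ℝ≥0∞ :=
    fun x => ENNReal.ofReal |u x - v x| with hEedef
  have hD_m : Measurable D := ENNReal.measurable_ofReal.comp (hmgu.sub hmgv).norm
  have hGU_m : Measurable GU := ENNReal.measurable_ofReal.comp hmgu.norm
  have hGV_m : Measurable GV := ENNReal.measurable_ofReal.comp hmgv.norm
  have hu_m : AEMeasurable u μ :=
    ContinuousOn.aemeasurable (fun x hx => (hud x hx).continuousAt.continuousWithinAt) hΩ
  have hv_m : AEMeasurable v μ :=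
    ContinuousOn.aemeasurable (fun x hx => (hvd x hx).continuousAt.continuousWithinAt) hΩ
  have hEe_m : AEMeasurable Ee μ :=
    ENNReal.measurable_ofReal.comp_aemeasurable (continuous_abs.measurable.comp_aemeasurable (hu_m.sub hv_m))
  have hβ_cont : Continuous β := by
    have : LipschitzWith (Real.toNNReal L) β := by
      apply LipschitzWith.of_dist_le_mul
      intro s r
      rw [Real.dist_eq, Real.dist_eq]
      calc |β s - β r| ≤ L * |s - r| := hL s r
        _ ≤ Real.toNNReal L * |s - r| :=
            mul_le_mul_of_nonneg_right (Real.le_coe_toNNReal L) (abs_nonneg _)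
    exact this.continuous
  have hrp : Measurable (fun t : ℝ => t ^ (2-γ)) := (Real.continuous_rpow_const hp0).measurable
  have hFu_m : AEMeasurable (fun x => max (-((inner ℝ (ω x) (gradient u x) : ℝ) +
      β (u x) * ‖gradient u x‖ ^ (2 - γ))) 0) μ := by
    refine AEMeasurable.max (AEMeasurable.neg (AEMeasurable.add ?_ ?_)) aemeasurable_const
    · exact hω.inner hmgu.aemeasurable
    · exact (hβ_cont.measurable.comp_aemeasurable hu_m).mul (hrp.comp hmgu.norm).aemeasurable
  have hFv_m : AEMeasurable (fun x => max (-((inner ℝ (ω x) (gradient v x) : ℝ) +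
      β (v x) * ‖gradient v x‖ ^ (2 - γ))) 0) μ := by
    refine AEMeasurable.max (AEMeasurable.neg (AEMeasurable.add ?_ ?_)) aemeasurable_const
    · exact hω.inner hmgv.aemeasurable
    · exact (hβ_cont.measurable.comp_aemeasurable hv_m).mul (hrp.comp hmgv.norm).aemeasurable
  set Fd : EuclideanSpace ℝ (Fin n) → ℝ≥0∞ := fun x =>
    ENNReal.ofReal |(max (-((inner ℝ (ω x) (gradient u x) : ℝ) +
        β (u x) * ‖gradient u x‖ ^ (2 - γ))) 0) -
      (max (-((inner ℝ (ω x) (gradient v x) : ℝ) +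
        β (v x) * ‖gradient v x‖ ^ (2 - γ))) 0)| with hFddef
  have hFd_m : AEMeasurable Fd μ :=
    ENNReal.measurable_ofReal.comp_aemeasurable (continuous_abs.measurable.comp_aemeasurable (hFu_m.sub hFv_m))
  -- integral ↔ lintegral
  have key : ∀ (f : EuclideanSpace ℝ (Fin n) → ℝ), AEMeasurable f μ →
      ∫ x, (f x)^2 ∂μ = (∫⁻ x, ENNReal.ofReal |f x| ^ (2:ℝ) ∂μ).toReal := by
    intro f hf
    rw [MeasureTheory.integral_eq_lintegral_of_nonneg_ae (ae_of_all _ fun x => sq_nonneg (f x))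
      ((hf.pow_const 2).aestronglyMeasurable)]
    congr 1
    refine lintegral_congr fun x => ?_
    rw [← sq_abs (f x), ENNReal.ofReal_pow (abs_nonneg _), ← ENNReal.rpow_natCast]
    norm_num
  set A := ∫⁻ x, D x ^ (2:ℝ) ∂μ with hA
  set Bu := ∫⁻ x, GU x ^ (2:ℝ) ∂μ with hBu
  set Bv := ∫⁻ x, GV x ^ (2:ℝ) ∂μ with hBv
  set Ev := ∫⁻ x, Ee x ^ (2:ℝ) ∂μ with hEv
  set LL := ∫⁻ x, Fd x ^ (2:ℝ) ∂μ with hLL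
  have eqA : ∫ x in Ω, ‖gradient u x - gradient v x‖^2 = A.toReal := by
    have h := key (fun x => ‖gradient u x - gradient v x‖) (hmgu.sub hmgv).norm.aemeasurable
    simp only [abs_norm] at h
    rw [hA, ← hμ]; simp only [hDdef]; exact h
  have eqBu : ∫ x in Ω, ‖gradient u x‖^2 = Bu.toReal := by
    have h := key (fun x => ‖gradient u x‖) hmgu.norm.aemeasurable
    simp only [abs_norm] at h
    rw [hBu, ← hμ]; simp only [hGUdef]; exact h
  have eqEv : ∫ x in Ω, (u x - v x)^2 = Ev.toReal := by
    have h := key (fun x => u x - v x) (hu_m.sub hv_m)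
    rw [hEv, ← hμ]; simp only [hEedef]; exact h
  have eqL : (∫ x in Ω,
      ((max (-((inner ℝ (ω x) (gradient u x) : ℝ) +
          β (u x) * ‖gradient u x‖ ^ (2 - γ))) 0) -
        (max (-((inner ℝ (ω x) (gradient v x) : ℝ) +
          β (v x) * ‖gradient v x‖ ^ (2 - γ))) 0)) ^ 2) = LL.toReal := by
    have h := key _ (hFu_m.sub hFv_m)
    rw [hLL, ← hμ]; simp only [hFddef]; exact h
  -- finiteness
  have hfin : ∀ (f : EuclideanSpace ℝ (Fin n) → ℝ), Integrable (fun x => (f x)^2) μ →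
      (∫⁻ x, ENNReal.ofReal |f x| ^ (2:ℝ) ∂μ) ≠ ⊤ := by
    intro f hf
    have h1 : ∀ x, ENNReal.ofReal |f x| ^ (2:ℝ) = ‖(f x)^2‖ₑ := by
      intro x
      rw [← ofReal_norm, Real.norm_eq_abs, abs_pow,
        ENNReal.ofReal_pow (abs_nonneg _), ← ENNReal.rpow_natCast]
      norm_num
    rw [lintegral_congr h1]
    exact hf.hasFiniteIntegral.ne
  have hBu_ne : Bu ≠ ⊤ := by
    have h := hfin (fun x => ‖gradient u x‖) hIu
    simp only [abs_norm] at h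
    rw [hBu]; simp only [hGUdef]; exact h
  have hBv_ne : Bv ≠ ⊤ := by
    have h := hfin (fun x => ‖gradient v x‖) hIv
    simp only [abs_norm] at h
    rw [hBv]; simp only [hGVdef]; exact h
  have hEv_ne : Ev ≠ ⊤ := by
    have h := hfin (fun x => u x - v x) hIuv
    rw [hEv]; simp only [hEedef]; exact h
  have hA_ne : A ≠ ⊤ := by
    have hmono : A ≤ 3 * (Bu + Bv) := by
      have hpt : ∀ x, D x ^ (2:ℝ) ≤ 3 * (GU x ^ (2:ℝ) + GV x ^ (2:ℝ)) := by
        intro x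
        calc D x ^ (2:ℝ) ≤ (GU x + GV x) ^ (2:ℝ) := by
              apply ENNReal.rpow_le_rpow _ (by norm_num)
              calc D x ≤ ENNReal.ofReal (‖gradient u x‖ + ‖gradient v x‖) :=
                    ENNReal.ofReal_le_ofReal (norm_sub_le _ _)
                _ = GU x + GV x := ENNReal.ofReal_add (norm_nonneg _) (norm_nonneg _)
          _ ≤ 3 * (GU x ^ (2:ℝ) + GV x ^ (2:ℝ)) := aux_sq_add_le _ _
      calc A ≤ ∫⁻ x, 3 * (GU x ^ (2:ℝ) + GV x ^ (2:ℝ)) ∂μ := lintegral_mono hpt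
        _ = 3 * (Bu + Bv) := by
            rw [lintegral_const_mul' _ _ (by norm_num : (3:ℝ≥0∞) ≠ ⊤),
              lintegral_add_left (hGU_m.pow_const _)]
    exact ne_top_of_le_ne_top
      (ENNReal.mul_ne_top (by norm_num) (ENNReal.add_ne_top.2 ⟨hBu_ne, hBv_ne⟩)) hmono
  -- pointwise bound
  set c1 : ℝ≥0∞ := ENNReal.ofReal Wp with hc1
  set c2 : ℝ≥0∞ := ENNReal.ofReal Mp with hc2
  set c3 : ℝ≥0∞ := ENNReal.ofReal K₁ with hc3
  set φ1 : EuclideanSpace ℝ (Fin n) → ℝ≥0∞ := fun x => c1 * D x with hφ1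
  set φ2 : EuclideanSpace ℝ (Fin n) → ℝ≥0∞ := fun x => c2 * D x ^ (2-γ:ℝ) with hφ2
  set φ3 : EuclideanSpace ℝ (Fin n) → ℝ≥0∞ :=
    fun x => c3 * (Ee x ^ (γ-1:ℝ) * GU x ^ (2-γ:ℝ)) with hφ3
  have hφ1_m : AEMeasurable φ1 μ := (hD_m.const_mul c1).aemeasurable
  have hφ2_m : AEMeasurable φ2 μ := ((hD_m.pow_const _).const_mul c2).aemeasurable
  have hφ3_m : AEMeasurable φ3 μ :=
    ((hEe_m.pow_const _).mul (hGU_m.pow_const _).aemeasurable).const_mul c3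
  have hpt : ∀ᵐ x ∂μ, Fd x ≤ φ1 x + φ2 x + φ3 x := by
    filter_upwards [hωW] with x hx
    have hb := aux_ptwise hγ₁ hγ₂ hM hL (ω x) (gradient u x) (gradient v x) (u x) (v x) hx
    calc Fd x ≤ ENNReal.ofReal (Wp * ‖gradient u x - gradient v x‖ +
          Mp * ‖gradient u x - gradient v x‖ ^ (2-γ) +
          K₁ * (|u x - v x| ^ (γ-1) * ‖gradient u x‖ ^ (2-γ))) :=
        ENNReal.ofReal_le_ofReal hb
      _ = φ1 x + φ2 x + φ3 x := by
          simp only [hφ1, hφ2, hφ3, hc1, hc2, hc3, hDdef, hEedef, hGUdef]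
          rw [ENNReal.ofReal_add (add_nonneg (mul_nonneg hWp0 (norm_nonneg _))
              (mul_nonneg hMp0 (Real.rpow_nonneg (norm_nonneg _) _)))
              (mul_nonneg hK₁0 (mul_nonneg (Real.rpow_nonneg (abs_nonneg _) _)
                (Real.rpow_nonneg (norm_nonneg _) _))),
            ENNReal.ofReal_add (mul_nonneg hWp0 (norm_nonneg _))
              (mul_nonneg hMp0 (Real.rpow_nonneg (norm_nonneg _) _)),
            ENNReal.ofReal_mul hWp0, ENNReal.ofReal_mul hMp0, ENNReal.ofReal_mul hK₁0,
            ENNReal.ofReal_mul (Real.rpow_nonneg (abs_nonneg _) _),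
            ENNReal.ofReal_rpow_of_nonneg (norm_nonneg _) hp0,
            ENNReal.ofReal_rpow_of_nonneg (abs_nonneg _) hq0,
            ENNReal.ofReal_rpow_of_nonneg (norm_nonneg _) hp0]
  -- Minkowski
  have mink : (∫⁻ x, (φ1 x + φ2 x + φ3 x) ^ (2:ℝ) ∂μ) ^ (1/2:ℝ) ≤
      (∫⁻ x, φ1 x ^ (2:ℝ) ∂μ) ^ (1/2:ℝ) + (∫⁻ x, φ2 x ^ (2:ℝ) ∂μ) ^ (1/2:ℝ) +
      (∫⁻ x, φ3 x ^ (2:ℝ) ∂μ) ^ (1/2:ℝ) := by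
    calc (∫⁻ x, (φ1 x + φ2 x + φ3 x) ^ (2:ℝ) ∂μ) ^ (1/2:ℝ)
        = (∫⁻ x, (((φ1 + φ2) + φ3) x) ^ (2:ℝ) ∂μ) ^ (1/2:ℝ) := rfl
      _ ≤ (∫⁻ x, ((φ1 + φ2) x) ^ (2:ℝ) ∂μ) ^ (1/2:ℝ) + (∫⁻ x, φ3 x ^ (2:ℝ) ∂μ) ^ (1/2:ℝ) :=
          ENNReal.lintegral_Lp_add_le (hφ1_m.add hφ2_m) hφ3_m one_le_two
      _ ≤ ((∫⁻ x, φ1 x ^ (2:ℝ) ∂μ) ^ (1/2:ℝ) + (∫⁻ x, φ2 x ^ (2:ℝ) ∂μ) ^ (1/2:ℝ)) +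
          (∫⁻ x, φ3 x ^ (2:ℝ) ∂μ) ^ (1/2:ℝ) :=
          add_le_add_left (ENNReal.lintegral_Lp_add_le hφ1_m hφ2_m one_le_two) _
  have hLL1 : LL ^ (1/2:ℝ) ≤ (∫⁻ x, (φ1 x + φ2 x + φ3 x) ^ (2:ℝ) ∂μ) ^ (1/2:ℝ) := by
    apply ENNReal.rpow_le_rpow _ (by norm_num)
    exact lintegral_mono_ae (hpt.mono fun x hx => ENNReal.rpow_le_rpow hx (by norm_num))
  -- evaluations
  have E1 : (∫⁻ x, φ1 x ^ (2:ℝ) ∂μ) ^ (1/2:ℝ) = c1 * A ^ (1/2:ℝ) := by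
    rw [lintegral_congr fun x => ENNReal.mul_rpow_of_nonneg (c1) (D x) (by norm_num : (0:ℝ) ≤ 2),
      lintegral_const_mul' _ _ (ENNReal.rpow_ne_top_of_nonneg (by norm_num)
        (by rw [hc1]; exact ENNReal.ofReal_ne_top)),
      ENNReal.mul_rpow_of_nonneg _ _ (by norm_num : (0:ℝ) ≤ 1/2), ← ENNReal.rpow_mul, ← hA,
      show (2:ℝ)*(1/2) = 1 by norm_num, ENNReal.rpow_one]
  have E2 : (∫⁻ x, φ2 x ^ (2:ℝ) ∂μ) ^ (1/2:ℝ) ≤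
      (c2 * (volume Ω) ^ ((γ-1)/2:ℝ)) * (A ^ (1/2:ℝ)) ^ (2-γ:ℝ) := by
    have h1 : ∀ x, φ2 x ^ (2:ℝ) = c2 ^ (2:ℝ) * (D x ^ (2:ℝ)) ^ (2-γ:ℝ) := by
      intro x
      rw [hφ2]
      rw [ENNReal.mul_rpow_of_nonneg _ _ (by norm_num : (0:ℝ) ≤ 2), ← ENNReal.rpow_mul,
        ← ENNReal.rpow_mul, mul_comm (2-γ) 2]
    have h2 := aux_holder_s4 μ (hD_m.pow_const (2:ℝ)).aemeasurable
      (aemeasurable_const (b := (1:ℝ≥0∞))) hp0' hq0' (by ring)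
    simp only [ENNReal.one_rpow, mul_one] at h2
    have h3 : (∫⁻ _x, (1:ℝ≥0∞) ∂μ) = volume Ω := by
      rw [lintegral_one, hμ, Measure.restrict_apply_univ]
    rw [h3] at h2
    calc (∫⁻ x, φ2 x ^ (2:ℝ) ∂μ) ^ (1/2:ℝ)
        = (c2 ^ (2:ℝ) * ∫⁻ x, (D x ^ (2:ℝ)) ^ (2-γ:ℝ) ∂μ) ^ (1/2:ℝ) := by
          rw [lintegral_congr h1, lintegral_const_mul' _ _
            (ENNReal.rpow_ne_top_of_nonneg (by norm_num) ENNReal.ofReal_ne_top)]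
      _ ≤ (c2 ^ (2:ℝ) * (A ^ (2-γ:ℝ) * (volume Ω) ^ (γ-1:ℝ))) ^ (1/2:ℝ) := by
          apply ENNReal.rpow_le_rpow _ (by norm_num)
          exact mul_le_mul_right h2 _
      _ = (c2 * (volume Ω) ^ ((γ-1)/2:ℝ)) * (A ^ (1/2:ℝ)) ^ (2-γ:ℝ) := by
          rw [ENNReal.mul_rpow_of_nonneg _ _ (by norm_num : (0:ℝ) ≤ 1/2),
            ENNReal.mul_rpow_of_nonneg _ _ (by norm_num : (0:ℝ) ≤ 1/2),
            ← ENNReal.rpow_mul, ← ENNReal.rpow_mul, ← ENNReal.rpow_mul, ← ENNReal.rpow_mul,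
            show (2:ℝ)*(1/2) = 1 by norm_num, show (2-γ)*(1/2:ℝ) = (1/2)*(2-γ) by ring,
            show (γ-1)*(1/2:ℝ) = (γ-1)/2 by ring, ENNReal.rpow_one, ENNReal.rpow_mul]
          ring
  have E3 : (∫⁻ x, φ3 x ^ (2:ℝ) ∂μ) ^ (1/2:ℝ) ≤
      c3 * ((Bu ^ (1/2:ℝ)) ^ (2-γ:ℝ) * (Ev ^ (1/2:ℝ)) ^ (γ-1:ℝ)) := by
    have h1 : ∀ x, φ3 x ^ (2:ℝ) = c3 ^ (2:ℝ) *
        ((Ee x ^ (2:ℝ)) ^ (γ-1:ℝ) * (GU x ^ (2:ℝ)) ^ (2-γ:ℝ)) := by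
      intro x
      rw [hφ3]
      rw [ENNReal.mul_rpow_of_nonneg _ _ (by norm_num : (0:ℝ) ≤ 2),
        ENNReal.mul_rpow_of_nonneg _ _ (by norm_num : (0:ℝ) ≤ 2),
        ← ENNReal.rpow_mul, ← ENNReal.rpow_mul, ← ENNReal.rpow_mul, ← ENNReal.rpow_mul,
        mul_comm (γ-1) 2, mul_comm (2-γ) 2]
    have h2 := aux_holder_s4 μ (hEe_m.pow_const (2:ℝ))
      (hGU_m.pow_const (2:ℝ)).aemeasurable hq0' hp0' (by ring)
    calc (∫⁻ x, φ3 x ^ (2:ℝ) ∂μ) ^ (1/2:ℝ)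
        = (c3 ^ (2:ℝ) * ∫⁻ x, (Ee x ^ (2:ℝ)) ^ (γ-1:ℝ) * (GU x ^ (2:ℝ)) ^ (2-γ:ℝ) ∂μ) ^ (1/2:ℝ) := by
          rw [lintegral_congr h1, lintegral_const_mul' _ _
            (ENNReal.rpow_ne_top_of_nonneg (by norm_num) ENNReal.ofReal_ne_top)]
      _ ≤ (c3 ^ (2:ℝ) * (Ev ^ (γ-1:ℝ) * Bu ^ (2-γ:ℝ))) ^ (1/2:ℝ) := by
          apply ENNReal.rpow_le_rpow _ (by norm_num)
          exact mul_le_mul_right h2 _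
      _ = c3 * ((Bu ^ (1/2:ℝ)) ^ (2-γ:ℝ) * (Ev ^ (1/2:ℝ)) ^ (γ-1:ℝ)) := by
          rw [ENNReal.mul_rpow_of_nonneg _ _ (by norm_num : (0:ℝ) ≤ 1/2),
            ENNReal.mul_rpow_of_nonneg _ _ (by norm_num : (0:ℝ) ≤ 1/2),
            ← ENNReal.rpow_mul, ← ENNReal.rpow_mul, ← ENNReal.rpow_mul,
            show (2:ℝ)*(1/2) = 1 by norm_num, show (γ-1)*(1/2:ℝ) = (1/2)*(γ-1) by ring,
            show (2-γ)*(1/2:ℝ) = (1/2)*(2-γ) by ring, ENNReal.rpow_one,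
            ENNReal.rpow_mul, ENNReal.rpow_mul]
          ring
  -- combine in ℝ≥0∞
  set S : ℝ≥0∞ := A ^ (1/2:ℝ) + (A ^ (1/2:ℝ)) ^ (2-γ:ℝ) +
    (Bu ^ (1/2:ℝ)) ^ (2-γ:ℝ) * (Ev ^ (1/2:ℝ)) ^ (γ-1:ℝ) with hS
  have hc1C : c1 ≤ ENNReal.ofReal C := ENNReal.ofReal_le_ofReal (by rw [hC]; linarith)
  have hc2C : c2 * (volume Ω) ^ ((γ-1)/2:ℝ) ≤ ENNReal.ofReal C := by
    have hΩrp : (volume Ω) ^ ((γ-1)/2:ℝ) = ENNReal.ofReal (vΩ ^ ((γ-1)/2)) := by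
      conv_lhs => rw [← ENNReal.ofReal_toReal hΩfin.ne]
      rw [ENNReal.ofReal_rpow_of_nonneg ENNReal.toReal_nonneg
        (by linarith : (0:ℝ) ≤ (γ-1)/2), hvΩ]
    rw [hΩrp, hc2, ← ENNReal.ofReal_mul hMp0]
    exact ENNReal.ofReal_le_ofReal (by rw [hC]; linarith)
  have hc3C : c3 ≤ ENNReal.ofReal C := ENNReal.ofReal_le_ofReal (by rw [hC]; linarith)
  have final_enn : LL ^ (1/2:ℝ) ≤ ENNReal.ofReal C * S := by
    calc LL ^ (1/2:ℝ) ≤ (∫⁻ x, (φ1 x + φ2 x + φ3 x) ^ (2:ℝ) ∂μ) ^ (1/2:ℝ) := hLL1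
      _ ≤ (∫⁻ x, φ1 x ^ (2:ℝ) ∂μ) ^ (1/2:ℝ) + (∫⁻ x, φ2 x ^ (2:ℝ) ∂μ) ^ (1/2:ℝ) +
          (∫⁻ x, φ3 x ^ (2:ℝ) ∂μ) ^ (1/2:ℝ) := mink
      _ ≤ c1 * A ^ (1/2:ℝ) + (c2 * (volume Ω) ^ ((γ-1)/2:ℝ)) * (A ^ (1/2:ℝ)) ^ (2-γ:ℝ) +
          c3 * ((Bu ^ (1/2:ℝ)) ^ (2-γ:ℝ) * (Ev ^ (1/2:ℝ)) ^ (γ-1:ℝ)) :=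
          add_le_add (add_le_add E1.le E2) E3
      _ ≤ ENNReal.ofReal C * A ^ (1/2:ℝ) + ENNReal.ofReal C * (A ^ (1/2:ℝ)) ^ (2-γ:ℝ) +
          ENNReal.ofReal C * ((Bu ^ (1/2:ℝ)) ^ (2-γ:ℝ) * (Ev ^ (1/2:ℝ)) ^ (γ-1:ℝ)) := by
          gcongr
      _ = ENNReal.ofReal C * S := by rw [hS]; ring
  -- pass to reals
  have hA1 : A ^ (1/2:ℝ) ≠ ⊤ := ENNReal.rpow_ne_top_of_nonneg (by norm_num) hA_ne
  have hA2 : (A ^ (1/2:ℝ)) ^ (2-γ:ℝ) ≠ ⊤ := ENNReal.rpow_ne_top_of_nonneg hp0 hA1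
  have hB1 : (Bu ^ (1/2:ℝ)) ^ (2-γ:ℝ) ≠ ⊤ :=
    ENNReal.rpow_ne_top_of_nonneg hp0 (ENNReal.rpow_ne_top_of_nonneg (by norm_num) hBu_ne)
  have hE1 : (Ev ^ (1/2:ℝ)) ^ (γ-1:ℝ) ≠ ⊤ :=
    ENNReal.rpow_ne_top_of_nonneg hq0 (ENNReal.rpow_ne_top_of_nonneg (by norm_num) hEv_ne)
  have hprod : (Bu ^ (1/2:ℝ)) ^ (2-γ:ℝ) * (Ev ^ (1/2:ℝ)) ^ (γ-1:ℝ) ≠ ⊤ :=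
    ENNReal.mul_ne_top hB1 hE1
  have hS_ne : S ≠ ⊤ := by
    rw [hS]
    exact ENNReal.add_ne_top.2 ⟨ENNReal.add_ne_top.2 ⟨hA1, hA2⟩, hprod⟩
  rw [eqL, eqA, eqBu, eqEv]
  simp only [ENNReal.toReal_rpow]
  have hsum : ((A ^ (1/2:ℝ)).toReal) ^ (2-γ:ℝ) = ((A ^ (1/2:ℝ)) ^ (2-γ:ℝ)).toReal :=
    ENNReal.toReal_rpow _ _
  calc (LL ^ ((1:ℝ)/2)).toReal ≤ (ENNReal.ofReal C * S).toReal :=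
        ENNReal.toReal_mono (ENNReal.mul_ne_top ENNReal.ofReal_ne_top hS_ne) final_enn
    _ = C * S.toReal := by rw [ENNReal.toReal_mul, ENNReal.toReal_ofReal hC0.le]
    _ = C * ((A ^ ((1:ℝ)/2)).toReal + ((A ^ ((1:ℝ)/2)) ^ (2-γ:ℝ)).toReal +
        ((Bu ^ ((1:ℝ)/2)) ^ (2-γ:ℝ)).toReal * ((Ev ^ ((1:ℝ)/2)) ^ (γ-1:ℝ)).toReal) := by
        rw [hS, ENNReal.toReal_add (ENNReal.add_ne_top.2 ⟨hA1, hA2⟩) hprod,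
          ENNReal.toReal_add hA1 hA2, ENNReal.toReal_mul]
end

section
/- Let Ω ⊆ ℝⁿ be a measurable set of finite Lebesgue measure |Ω|, let γ ∈ (1,2], let K ∈ L²(Ω × Ω), let Θ : Ω → ℝ be measurable with Θ₋(y) ≤ S a.e. (S ≥ 0), let ω : Ω → ℝⁿ be measurable with |ω(x)| ≤ W a.e., and let β : ℝ → ℝ satisfy |β(s)| ≤ M for all s. For u : ℝⁿ → ℝ differentiable at every point of Ω with ‖u‖_{H¹(Ω)} < ∞, define f[u](x) := ∫_Ω (u(y) − Θ(y))₊ K(x,y) dy + (ω(x)·∇u(x) + β(u(x)) |∇u(x)|^{2−γ})₋. Then there exists C > 0, depending only on |Ω| and S, such that ‖f[u]‖_{L²(Ω)} ≤ C ( ‖K‖_{L²(Ω×Ω)} + W + M ) ( ‖u‖_{H¹(Ω)} + 1 ). -/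
open MeasureTheory Real
open scoped ENNReal NNReal

section helpers
variable {α : Type*} [MeasurableSpace α] {μ : Measure α}

lemma aux_sqrt_eLpNorm {f : α → ℝ} (hf : MemLp f 2 μ) :
    (eLpNorm f 2 μ).toReal = Real.sqrt (∫ a, f a ^ 2 ∂μ) := by
  rw [hf.eLpNorm_eq_integral_rpow_norm two_ne_zero ENNReal.ofNat_ne_top,
    ENNReal.toReal_ofReal (by positivity), Real.sqrt_eq_rpow]
  norm_num

lemma aux_cs {f g : α → ℝ} (hf : MemLp f 2 μ) (hg : MemLp g 2 μ) :
    ∫ a, f a * g a ∂μ ≤ Real.sqrt (∫ a, f a ^ 2 ∂μ) * Real.sqrt (∫ a, g a ^ 2 ∂μ) := by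
  have h := real_inner_le_norm (hf.toLp f) (hg.toLp g)
  rw [L2.inner_def] at h
  rw [Lp.norm_toLp _ hf, Lp.norm_toLp _ hg, aux_sqrt_eLpNorm hf, aux_sqrt_eLpNorm hg] at h
  refine le_trans (le_of_eq ?_) h
  refine (integral_congr_ae ?_).symm
  filter_upwards [hf.coeFn_toLp, hg.coeFn_toLp] with a h1 h2
  simp [h1, h2, RCLike.inner_apply, starRingEnd_apply]; ring

lemma aux_tri {f g : α → ℝ} (hf : MemLp f 2 μ) (hg : MemLp g 2 μ) :
    Real.sqrt (∫ a, (f a + g a) ^ 2 ∂μ) ≤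
      Real.sqrt (∫ a, f a ^ 2 ∂μ) + Real.sqrt (∫ a, g a ^ 2 ∂μ) := by
  have h := norm_add_le (hf.toLp f) (hg.toLp g)
  rw [← MemLp.toLp_add, Lp.norm_toLp _ (hf.add hg), Lp.norm_toLp _ hf, Lp.norm_toLp _ hg,
    aux_sqrt_eLpNorm (hf.add hg), aux_sqrt_eLpNorm hf, aux_sqrt_eLpNorm hg] at h
  exact h

lemma aux_mono {f g : α → ℝ} (hg2 : Integrable (fun a => g a ^ 2) μ)
    (h0 : 0 ≤ᵐ[μ] f) (h : f ≤ᵐ[μ] g) :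
    Real.sqrt (∫ a, f a ^ 2 ∂μ) ≤ Real.sqrt (∫ a, g a ^ 2 ∂μ) := by
  refine Real.sqrt_le_sqrt (integral_mono_of_nonneg ?_ hg2 ?_)
  · filter_upwards [h0] with a ha using by positivity
  · filter_upwards [h0, h] with a h1 h2 using pow_le_pow_left₀ h1 h2 2

end helpers

set_option maxHeartbeats 2000000 in
/-- Bound for the full nonlinearity (time-independent version, used in the proof of
Theorem 1.2): with
`f[u](x) = ∫_Ω (u(y) − Θ(y))₊ K(x,y) dy + (ω(x)·∇u(x) + β(u(x)) |∇u(x)|^(2−γ))₋`,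
there is `C > 0`, depending only on `|Ω|` and `S`, such that
`‖f[u]‖_{L²(Ω)} ≤ C (‖K‖_{L²(Ω×Ω)} + W + M)(‖u‖_{H¹(Ω)} + 1)`. -/
theorem nonlinearity_structural_bound (n : ℕ) (Ω : Set (EuclideanSpace ℝ (Fin n)))
    (hΩ : MeasurableSet Ω) (hΩfin : volume Ω < ⊤) (S : ℝ) (hS : 0 ≤ S) :
    ∃ C > 0, ∀ (γ W M : ℝ)
      (K : EuclideanSpace ℝ (Fin n) × EuclideanSpace ℝ (Fin n) → ℝ)
      (Θ : EuclideanSpace ℝ (Fin n) → ℝ)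
      (ω : EuclideanSpace ℝ (Fin n) → EuclideanSpace ℝ (Fin n))
      (β : ℝ → ℝ) (u : EuclideanSpace ℝ (Fin n) → ℝ),
      1 < γ → γ ≤ 2 → 0 ≤ W →
      MemLp K 2 ((volume.restrict Ω).prod (volume.restrict Ω)) →
      AEMeasurable Θ (volume.restrict Ω) →
      (∀ᵐ y ∂(volume.restrict Ω), max (-(Θ y)) 0 ≤ S) →
      AEMeasurable ω (volume.restrict Ω) →
      (∀ᵐ x ∂(volume.restrict Ω), ‖ω x‖ ≤ W) →
      (∀ s, |β s| ≤ M) →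
      (∀ x ∈ Ω, DifferentiableAt ℝ u x) →
      IntegrableOn (fun x => u x ^ 2 + ‖gradient u x‖ ^ 2) Ω →
      (∫ x in Ω,
          ((∫ y in Ω, max (u y - Θ y) 0 * K (x, y)) +
            max (-((inner ℝ (ω x) (gradient u x) : ℝ) +
              β (u x) * ‖gradient u x‖ ^ (2 - γ))) 0) ^ 2) ^ ((1 : ℝ) / 2) ≤
        C * ((∫ p, K p ^ 2 ∂((volume.restrict Ω).prod (volume.restrict Ω))) ^ ((1 : ℝ) / 2)
              + W + M) *
          ((∫ x in Ω, (u x ^ 2 + ‖gradient u x‖ ^ 2)) ^ ((1 : ℝ) / 2) + 1) := by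
  classical
  set V := Real.sqrt ((volume Ω).toReal) with hVdef
  have hV0 : 0 ≤ V := Real.sqrt_nonneg _
  refine ⟨1 + S * V + V, by positivity, ?_⟩
  intro γ W M K Θ ω β u hγ1 hγ2 hW hK hΘ hΘS hω hωW hβ hu hint
  set μ := volume.restrict Ω with hμdef
  haveI : IsFiniteMeasure μ := ⟨by rw [Measure.restrict_apply_univ]; exact hΩfin⟩
  have hM : 0 ≤ M := le_trans (abs_nonneg _) (hβ 0)
  -- rewrite rpow to sqrt
  rw [show ((1:ℝ)/2) = ((1:ℝ)/2) from rfl, ← Real.sqrt_eq_rpow, ← Real.sqrt_eq_rpow,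
    ← Real.sqrt_eq_rpow]
  -- measurability
  have hu_meas : AEMeasurable u μ :=
    ContinuousOn.aemeasurable (fun x hx => ((hu x hx).continuousAt.continuousWithinAt)) hΩ
  have hgrad_meas : Measurable (gradient u) := by
    have heq : gradient u = fun x =>
        (InnerProductSpace.toDual ℝ (EuclideanSpace ℝ (Fin n))).symm (fderiv ℝ u x) := rfl
    rw [heq]
    exact (LinearIsometryEquiv.continuous _).measurable.comp (measurable_fderiv ℝ u)
  have hg_meas : AEStronglyMeasurable (fun x => ‖gradient u x‖) μ :=
    hgrad_meas.norm.aestronglyMeasurable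
  have hint' : Integrable (fun x => u x ^ 2 + ‖gradient u x‖ ^ 2) μ := hint
  have hu2 : Integrable (fun x => u x ^ 2) μ := by
    refine hint'.mono' ((hu_meas.pow_const 2).aestronglyMeasurable) ?_
    refine Filter.Eventually.of_forall fun x => ?_
    rw [Real.norm_eq_abs, abs_of_nonneg (sq_nonneg _)]
    exact le_add_of_nonneg_right (sq_nonneg _)
  have hg2 : Integrable (fun x => ‖gradient u x‖ ^ 2) μ := by
    refine hint'.mono' (hg_meas.aemeasurable.pow_const 2).aestronglyMeasurable ?_
    refine Filter.Eventually.of_forall fun x => ?_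
    rw [Real.norm_eq_abs, abs_of_nonneg (sq_nonneg _)]
    exact le_add_of_nonneg_left (sq_nonneg _)
  have huL2 : MemLp u 2 μ := (memLp_two_iff_integrable_sq hu_meas.aestronglyMeasurable).2 hu2
  have hgL2 : MemLp (fun x => ‖gradient u x‖) 2 μ := (memLp_two_iff_integrable_sq hg_meas).2 hg2
  set N := Real.sqrt (∫ x, (u x ^ 2 + ‖gradient u x‖ ^ 2) ∂μ) with hNdef
  set NK := Real.sqrt (∫ p, K p ^ 2 ∂(μ.prod μ)) with hNKdef
  have hN0 : 0 ≤ N := Real.sqrt_nonneg _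
  have hNK0 : 0 ≤ NK := Real.sqrt_nonneg _
  -- φ, c₁ and h
  have hφL2 : MemLp (fun y => ‖u y‖ + S) 2 μ := huL2.norm.add (memLp_const S)
  set c₁ := Real.sqrt (∫ y, (‖u y‖ + S) ^ 2 ∂μ) with hc₁def
  have hc₁0 : 0 ≤ c₁ := Real.sqrt_nonneg _
  have hh_meas : AEStronglyMeasurable (fun y => max (u y - Θ y) 0) μ :=
    ((hu_meas.sub hΘ).max aemeasurable_const).aestronglyMeasurable
  have hh_bound : ∀ᵐ y ∂μ, max (u y - Θ y) 0 ≤ ‖u y‖ + S := by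
    filter_upwards [hΘS] with y hy
    refine max_le ?_ (by positivity)
    have h1 : u y ≤ ‖u y‖ := le_abs_self _
    have h2 : -Θ y ≤ max (-(Θ y)) 0 := le_max_left _ _
    have := le_trans h2 hy
    rw [Real.norm_eq_abs]
    linarith [le_abs_self (u y)]
  have hhL2 : MemLp (fun y => max (u y - Θ y) 0) 2 μ := by
    refine hφL2.mono' hh_meas ?_
    filter_upwards [hh_bound] with y hy
    rw [Real.norm_eq_abs, abs_of_nonneg (le_max_right _ _)]
    exact hy
  have hhc₁ : Real.sqrt (∫ y, (max (u y - Θ y) 0) ^ 2 ∂μ) ≤ c₁ := by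
    refine aux_mono hφL2.integrable_sq ?_ hh_bound
    exact Filter.Eventually.of_forall fun y => le_max_right _ _
  -- K slices
  have hK2 : Integrable (fun p => K p ^ 2) (μ.prod μ) := hK.integrable_sq
  have hkint : Integrable (fun x => ∫ y, K (x, y) ^ 2 ∂μ) μ := hK2.integral_prod_left
  have hk_meas : AEStronglyMeasurable (fun x => Real.sqrt (∫ y, K (x, y) ^ 2 ∂μ)) μ :=
    Real.continuous_sqrt.comp_aestronglyMeasurable hkint.aestronglyMeasurable
  have hk_sq : ∀ x, (Real.sqrt (∫ y, K (x, y) ^ 2 ∂μ)) ^ 2 = ∫ y, K (x, y) ^ 2 ∂μ :=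
    fun x => Real.sq_sqrt (integral_nonneg fun y => sq_nonneg _)
  have hk2 : Integrable (fun x => (Real.sqrt (∫ y, K (x, y) ^ 2 ∂μ)) ^ 2) μ :=
    hkint.congr (Filter.Eventually.of_forall fun x => (hk_sq x).symm)
  have hkL2 : MemLp (fun x => Real.sqrt (∫ y, K (x, y) ^ 2 ∂μ)) 2 μ :=
    (memLp_two_iff_integrable_sq hk_meas).2 hk2
  have hkNK : ∫ x, (Real.sqrt (∫ y, K (x, y) ^ 2 ∂μ)) ^ 2 ∂μ = ∫ p, K p ^ 2 ∂(μ.prod μ) := by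
    rw [integral_congr_ae (Filter.Eventually.of_forall hk_sq)]
    exact integral_integral hK2
  have hKslice : ∀ᵐ x ∂μ, MemLp (fun y => K (x, y)) 2 μ := by
    filter_upwards [hK2.prod_right_ae, hK.aestronglyMeasurable.prodMk_left] with x h1 h2
    exact (memLp_two_iff_integrable_sq h2).2 h1
  -- bound on the integral term
  have hA : ∀ᵐ x ∂μ, |∫ y, max (u y - Θ y) 0 * K (x, y) ∂μ| ≤
      c₁ * Real.sqrt (∫ y, K (x, y) ^ 2 ∂μ) := by
    filter_upwards [hKslice] with x hx
    have cs := aux_cs hhL2.norm hx.norm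
    calc |∫ y, max (u y - Θ y) 0 * K (x, y) ∂μ|
        ≤ ∫ y, ‖max (u y - Θ y) 0 * K (x, y)‖ ∂μ := by
          rw [← Real.norm_eq_abs]; exact norm_integral_le_integral_norm _
      _ = ∫ y, ‖max (u y - Θ y) 0‖ * ‖K (x, y)‖ ∂μ := by
          refine integral_congr_ae (Filter.Eventually.of_forall fun y => ?_)
          simp [norm_mul]
      _ ≤ Real.sqrt (∫ y, ‖max (u y - Θ y) 0‖ ^ 2 ∂μ) *
            Real.sqrt (∫ y, ‖K (x, y)‖ ^ 2 ∂μ) := cs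
      _ = Real.sqrt (∫ y, (max (u y - Θ y) 0) ^ 2 ∂μ) *
            Real.sqrt (∫ y, K (x, y) ^ 2 ∂μ) := by
          simp [Real.norm_eq_abs, sq_abs]
      _ ≤ c₁ * Real.sqrt (∫ y, K (x, y) ^ 2 ∂μ) :=
          mul_le_mul_of_nonneg_right hhc₁ (Real.sqrt_nonneg _)
  -- bound on the gradient term
  have hB : ∀ᵐ x ∂μ, max (-((inner ℝ (ω x) (gradient u x) : ℝ) +
        β (u x) * ‖gradient u x‖ ^ (2 - γ))) 0 ≤ (W + M) * ‖gradient u x‖ + M := by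
    filter_upwards [hωW] with x hx
    have hg0 : (0:ℝ) ≤ ‖gradient u x‖ := norm_nonneg _
    have h1 : |(inner ℝ (ω x) (gradient u x) : ℝ)| ≤ W * ‖gradient u x‖ :=
      (abs_real_inner_le_norm _ _).trans (mul_le_mul_of_nonneg_right hx hg0)
    have h2 : ‖gradient u x‖ ^ (2 - γ) ≤ 1 + ‖gradient u x‖ := by
      rcases le_or_gt (‖gradient u x‖) 1 with hle | hlt
      · exact (Real.rpow_le_one hg0 hle (by linarith)).trans (by linarith)
      · calc ‖gradient u x‖ ^ (2 - γ) ≤ ‖gradient u x‖ ^ (1:ℝ) :=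
              Real.rpow_le_rpow_of_exponent_le hlt.le (by linarith)
          _ = ‖gradient u x‖ := Real.rpow_one _
          _ ≤ 1 + ‖gradient u x‖ := by linarith
    have hrp : (0:ℝ) ≤ ‖gradient u x‖ ^ (2 - γ) := Real.rpow_nonneg hg0 _
    have h3 : |β (u x) * ‖gradient u x‖ ^ (2 - γ)| ≤ M * (1 + ‖gradient u x‖) := by
      rw [abs_mul, abs_of_nonneg hrp]
      exact mul_le_mul (hβ _) h2 hrp hM
    calc max (-((inner ℝ (ω x) (gradient u x) : ℝ) +
          β (u x) * ‖gradient u x‖ ^ (2 - γ))) 0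
        ≤ |(inner ℝ (ω x) (gradient u x) : ℝ) + β (u x) * ‖gradient u x‖ ^ (2 - γ)| :=
          max_le (neg_le_abs _) (abs_nonneg _)
      _ ≤ |(inner ℝ (ω x) (gradient u x) : ℝ)| + |β (u x) * ‖gradient u x‖ ^ (2 - γ)| :=
          abs_add_le _ _
      _ ≤ W * ‖gradient u x‖ + M * (1 + ‖gradient u x‖) := add_le_add h1 h3
      _ = (W + M) * ‖gradient u x‖ + M := by ring
  -- the dominating function
  have hGL2 : MemLp (fun x => c₁ * Real.sqrt (∫ y, K (x, y) ^ 2 ∂μ) +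
      ((W + M) * ‖gradient u x‖ + M)) 2 μ :=
    (hkL2.const_mul c₁).add ((hgL2.const_mul (W + M)).add (memLp_const M))
  -- step 1 : domination
  have step1 : Real.sqrt (∫ x, ((∫ y, max (u y - Θ y) 0 * K (x, y) ∂μ) +
        max (-((inner ℝ (ω x) (gradient u x) : ℝ) +
          β (u x) * ‖gradient u x‖ ^ (2 - γ))) 0) ^ 2 ∂μ) ≤
      Real.sqrt (∫ x, (c₁ * Real.sqrt (∫ y, K (x, y) ^ 2 ∂μ) +
        ((W + M) * ‖gradient u x‖ + M)) ^ 2 ∂μ) := by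
    refine Real.sqrt_le_sqrt (integral_mono_of_nonneg
      (Filter.Eventually.of_forall fun x => sq_nonneg _) hGL2.integrable_sq ?_)
    filter_upwards [hA, hB, hKslice] with x h1 h2 _
    have habs : |(∫ y, max (u y - Θ y) 0 * K (x, y) ∂μ) +
        max (-((inner ℝ (ω x) (gradient u x) : ℝ) +
          β (u x) * ‖gradient u x‖ ^ (2 - γ))) 0| ≤
        c₁ * Real.sqrt (∫ y, K (x, y) ^ 2 ∂μ) + ((W + M) * ‖gradient u x‖ + M) := by
      refine (abs_add_le _ _).trans (add_le_add h1 ?_)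
      rw [abs_of_nonneg (le_max_right _ _)]
      exact h2
    calc ((∫ y, max (u y - Θ y) 0 * K (x, y) ∂μ) +
          max (-((inner ℝ (ω x) (gradient u x) : ℝ) +
            β (u x) * ‖gradient u x‖ ^ (2 - γ))) 0) ^ 2
        = |(∫ y, max (u y - Θ y) 0 * K (x, y) ∂μ) +
          max (-((inner ℝ (ω x) (gradient u x) : ℝ) +
            β (u x) * ‖gradient u x‖ ^ (2 - γ))) 0| ^ 2 := (sq_abs _).symm
      _ ≤ (c₁ * Real.sqrt (∫ y, K (x, y) ^ 2 ∂μ) +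
            ((W + M) * ‖gradient u x‖ + M)) ^ 2 :=
          pow_le_pow_left₀ (abs_nonneg _) habs 2
  -- step 2 : triangle inequality
  have const_sq : ∀ c : ℝ, 0 ≤ c → Real.sqrt (∫ _x, c ^ 2 ∂μ) = c * V := by
    intro c hc
    rw [integral_const, smul_eq_mul, Real.sqrt_mul measureReal_nonneg,
      Real.sqrt_sq hc, measureReal_def, Measure.restrict_apply_univ]
    ring
  have pull : ∀ (c : ℝ) (f : _ → ℝ), 0 ≤ c →
      Real.sqrt (∫ x, (c * f x) ^ 2 ∂μ) = c * Real.sqrt (∫ x, f x ^ 2 ∂μ) := by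
    intro c f hc
    have : (fun x => (c * f x) ^ 2) = fun x => c ^ 2 * f x ^ 2 := by
      funext x; ring
    rw [this, integral_const_mul, Real.sqrt_mul (sq_nonneg _), Real.sqrt_sq hc]
  have step2 : Real.sqrt (∫ x, (c₁ * Real.sqrt (∫ y, K (x, y) ^ 2 ∂μ) +
        ((W + M) * ‖gradient u x‖ + M)) ^ 2 ∂μ) ≤
      c₁ * NK + ((W + M) * N + M * V) := by
    have t1 := aux_tri (hkL2.const_mul c₁) ((hgL2.const_mul (W + M)).add (memLp_const M))
    have t2 := aux_tri (hgL2.const_mul (W + M)) (memLp_const (M : ℝ) (μ := μ))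
    have e1 : Real.sqrt (∫ x, (c₁ * Real.sqrt (∫ y, K (x, y) ^ 2 ∂μ)) ^ 2 ∂μ) = c₁ * NK := by
      rw [pull c₁ _ hc₁0, hNKdef, hkNK]
    have e2 : Real.sqrt (∫ x, ((W + M) * ‖gradient u x‖) ^ 2 ∂μ) ≤ (W + M) * N := by
      rw [pull (W + M) _ (by linarith)]
      refine mul_le_mul_of_nonneg_left ?_ (by linarith)
      refine Real.sqrt_le_sqrt (integral_mono hg2 hint' fun x => ?_)
      have := sq_nonneg (u x); simp; nlinarith
    have e3 : Real.sqrt (∫ _x, (M : ℝ) ^ 2 ∂μ) = M * V := const_sq M hM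
    calc Real.sqrt (∫ x, (c₁ * Real.sqrt (∫ y, K (x, y) ^ 2 ∂μ) +
          ((W + M) * ‖gradient u x‖ + M)) ^ 2 ∂μ)
        ≤ Real.sqrt (∫ x, (c₁ * Real.sqrt (∫ y, K (x, y) ^ 2 ∂μ)) ^ 2 ∂μ) +
            Real.sqrt (∫ x, ((W + M) * ‖gradient u x‖ + M) ^ 2 ∂μ) := t1
      _ ≤ c₁ * NK + ((W + M) * N + M * V) := by
          rw [e1]
          refine add_le_add_right (t2.trans ?_) _
          rw [e3]
          exact add_le_add_left e2 _
  -- c₁ ≤ N + S V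
  have hc₁N : c₁ ≤ N + S * V := by
    have t := aux_tri huL2.norm (memLp_const (S : ℝ) (μ := μ))
    have e1 : Real.sqrt (∫ y, ‖u y‖ ^ 2 ∂μ) ≤ N := by
      refine Real.sqrt_le_sqrt (integral_mono ?_ hint' fun x => ?_)
      · exact hu2.congr (Filter.Eventually.of_forall fun x => by
          simp [Real.norm_eq_abs, sq_abs])
      · simp only [Real.norm_eq_abs, sq_abs]
        exact le_add_of_nonneg_right (sq_nonneg _)
    have e2 : Real.sqrt (∫ _y, (S : ℝ) ^ 2 ∂μ) = S * V := const_sq S hS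
    calc c₁ ≤ Real.sqrt (∫ y, ‖u y‖ ^ 2 ∂μ) + Real.sqrt (∫ _y, (S : ℝ) ^ 2 ∂μ) := t
      _ ≤ N + S * V := by rw [e2]; exact add_le_add_left e1 _
  -- final assembly
  clear_value V N NK c₁
  have hP : NK ≤ (NK + W + M) * (N + 1) := by
    nlinarith [mul_nonneg hNK0 hN0, mul_nonneg hW hN0, mul_nonneg hM hN0]
  have hPM : M ≤ (NK + W + M) * (N + 1) := by
    nlinarith [mul_nonneg hNK0 hN0, mul_nonneg hW hN0, mul_nonneg hM hN0]
  have final : c₁ * NK + ((W + M) * N + M * V) ≤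
      (1 + S * V + V) * (NK + W + M) * (N + 1) := by
    have h1 : c₁ * NK ≤ (N + S * V) * NK := mul_le_mul_of_nonneg_right hc₁N hNK0
    have A1 : N * NK + (W + M) * N ≤ (NK + W + M) * (N + 1) := by nlinarith
    have A2 : S * V * NK ≤ S * V * ((NK + W + M) * (N + 1)) :=
      mul_le_mul_of_nonneg_left hP (mul_nonneg hS hV0)
    have A3 : M * V ≤ V * ((NK + W + M) * (N + 1)) := by
      calc M * V = V * M := mul_comm _ _
        _ ≤ V * ((NK + W + M) * (N + 1)) := mul_le_mul_of_nonneg_left hPM hV0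
    have e : (1 + S * V + V) * (NK + W + M) * (N + 1) =
        (NK + W + M) * (N + 1) + S * V * ((NK + W + M) * (N + 1)) +
          V * ((NK + W + M) * (N + 1)) := by ring
    nlinarith [h1, A1, A2, A3]
  calc Real.sqrt (∫ x, ((∫ y, max (u y - Θ y) 0 * K (x, y) ∂μ) +
        max (-((inner ℝ (ω x) (gradient u x) : ℝ) +
          β (u x) * ‖gradient u x‖ ^ (2 - γ))) 0) ^ 2 ∂μ)
      ≤ c₁ * NK + ((W + M) * N + M * V) := step1.trans step2
    _ ≤ (1 + S * V + V) * (NK + W + M) * (N + 1) := final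
end
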